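/- arXiv:1208.2905 — 7 statements merged into one kernel-verified Lean document; each statement's English description precedes it below -/
import Mathlib

section
/- Let a₂, d₃, β₁, β₂, β₃, β₄, β₅ ∈ ℂ with a₂ ≠ 0, and let g₃, g₄ : ℂ → ℂ be twice differentiable. Define v : ℂ⁴ → ℂ by v(z₁,w₁,z₂,w₂) = β₁ + (conj(a₂)·z₁ + a₂·w₁ + β₂)² + (z₁ + w₁ + z₂/(2·conj(a₂)) + w₂/(2·a₂) + β₃)² + g₃(w₁/(2·conj(a₂)) + conj(d₃)·w₂ + β₄) + g₄(z₁/(2·a₂) + d₃·z₂ + β₅). Then v satisfies the elliptic complex Monge–Ampère equation: (∂²v/∂z₁∂w₁)(∂²v/∂z₂∂w₂) − (∂²v/∂z₁∂w₂)(∂²v/∂z₂∂w₁) = 1 at every point of ℂ⁴. -/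
private lemma hasDerivAt_sq {f : ℂ → ℂ} {f' x : ℂ} (hf : HasDerivAt f f' x) :
    HasDerivAt (fun s => (f s) ^ 2) (2 * f x * f') x := by
  simpa [pow_one] using hf.fun_pow 2

/-- Partial derivative with respect to the first argument. -/
noncomputable def pd1 (f : ℂ → ℂ → ℂ → ℂ → ℂ) (a b c d : ℂ) : ℂ :=
  deriv (fun s => f s b c d) a

/-- Partial derivative with respect to the second argument. -/
noncomputable def pd2 (f : ℂ → ℂ → ℂ → ℂ → ℂ) (a b c d : ℂ) : ℂ :=
  deriv (fun s => f a s c d) b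

/-- Partial derivative with respect to the third argument. -/
noncomputable def pd3 (f : ℂ → ℂ → ℂ → ℂ → ℂ) (a b c d : ℂ) : ℂ :=
  deriv (fun s => f a b s d) c

/-- Partial derivative with respect to the fourth argument. -/
noncomputable def pd4 (f : ℂ → ℂ → ℂ → ℂ → ℂ) (a b c d : ℂ) : ℂ :=
  deriv (fun s => f a b c s) d

/-- the ansatz solves the elliptic complex Monge–Ampère equation. -/
theorem stmt0 (a₂ d₃ β₁ β₂ β₃ β₄ β₅ : ℂ) (ha : a₂ ≠ 0)
    (g₃ g₄ : ℂ → ℂ) (hg₃ : ContDiff ℂ 2 g₃) (hg₄ : ContDiff ℂ 2 g₄)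
    (v : ℂ → ℂ → ℂ → ℂ → ℂ)
    (hv : v = fun z₁ w₁ z₂ w₂ =>
      β₁ + ((starRingEnd ℂ) a₂ * z₁ + a₂ * w₁ + β₂) ^ 2
        + (z₁ + w₁ + z₂ / (2 * (starRingEnd ℂ) a₂) + w₂ / (2 * a₂) + β₃) ^ 2
        + g₃ (w₁ / (2 * (starRingEnd ℂ) a₂) + (starRingEnd ℂ) d₃ * w₂ + β₄)
        + g₄ (z₁ / (2 * a₂) + d₃ * z₂ + β₅)) :
    ∀ z₁ w₁ z₂ w₂ : ℂ,
      pd1 (pd2 v) z₁ w₁ z₂ w₂ * pd3 (pd4 v) z₁ w₁ z₂ w₂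
        - pd1 (pd4 v) z₁ w₁ z₂ w₂ * pd3 (pd2 v) z₁ w₁ z₂ w₂ = 1 := by

  subst hv
  intro z₁ w₁ z₂ w₂
  have hg₃' : Differentiable ℂ g₃ := hg₃.differentiable (by norm_num)
  have hca : (starRingEnd ℂ) a₂ ≠ 0 := by simpa using ha
  -- formula for pd2 v
  have h2 : ∀ p q r t : ℂ, pd2 (fun z₁ w₁ z₂ w₂ =>
      β₁ + ((starRingEnd ℂ) a₂ * z₁ + a₂ * w₁ + β₂) ^ 2
        + (z₁ + w₁ + z₂ / (2 * (starRingEnd ℂ) a₂) + w₂ / (2 * a₂) + β₃) ^ 2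
        + g₃ (w₁ / (2 * (starRingEnd ℂ) a₂) + (starRingEnd ℂ) d₃ * w₂ + β₄)
        + g₄ (z₁ / (2 * a₂) + d₃ * z₂ + β₅)) p q r t =
      2 * ((starRingEnd ℂ) a₂ * p + a₂ * q + β₂) * a₂
      + 2 * (p + q + r / (2 * (starRingEnd ℂ) a₂) + t / (2 * a₂) + β₃)
      + deriv g₃ (q / (2 * (starRingEnd ℂ) a₂) + (starRingEnd ℂ) d₃ * t + β₄)
          * (2 * (starRingEnd ℂ) a₂)⁻¹ := by
    intro p q r t
    unfold pd2
    have hA : HasDerivAt (fun s : ℂ => (starRingEnd ℂ) a₂ * p + a₂ * s + β₂) a₂ q := by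
      simpa using (((hasDerivAt_id q).const_mul a₂).const_add ((starRingEnd ℂ) a₂ * p)).add_const β₂
    have hB : HasDerivAt
        (fun s : ℂ => p + s + r / (2 * (starRingEnd ℂ) a₂) + t / (2 * a₂) + β₃) 1 q := by
      simpa using ((((hasDerivAt_id q).const_add p).add_const
        (r / (2 * (starRingEnd ℂ) a₂))).add_const (t / (2 * a₂))).add_const β₃
    have hC : HasDerivAt
        (fun s : ℂ => s / (2 * (starRingEnd ℂ) a₂) + (starRingEnd ℂ) d₃ * t + β₄)
        (2 * (starRingEnd ℂ) a₂)⁻¹ q := by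
      simpa [div_eq_mul_inv] using
        (((hasDerivAt_id q).mul_const (2 * (starRingEnd ℂ) a₂)⁻¹).add_const
          ((starRingEnd ℂ) d₃ * t)).add_const β₄
    have hG : HasDerivAt
        (fun s : ℂ => g₃ (s / (2 * (starRingEnd ℂ) a₂) + (starRingEnd ℂ) d₃ * t + β₄))
        (deriv g₃ (q / (2 * (starRingEnd ℂ) a₂) + (starRingEnd ℂ) d₃ * t + β₄)
          * (2 * (starRingEnd ℂ) a₂)⁻¹) q :=
      (hg₃'.differentiableAt.hasDerivAt).comp q hC
    have h := ((((hasDerivAt_const q β₁).add (hasDerivAt_sq hA)).add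
      (hasDerivAt_sq hB)).add hG).add_const (g₄ (p / (2 * a₂) + d₃ * r + β₅))
    have := h.deriv
    simp only [zero_add, mul_one] at this
    rw [show (fun s : ℂ =>
      β₁ + ((starRingEnd ℂ) a₂ * p + a₂ * s + β₂) ^ 2
        + (p + s + r / (2 * (starRingEnd ℂ) a₂) + t / (2 * a₂) + β₃) ^ 2
        + g₃ (s / (2 * (starRingEnd ℂ) a₂) + (starRingEnd ℂ) d₃ * t + β₄)
        + g₄ (p / (2 * a₂) + d₃ * r + β₅)) = _ from rfl]
    exact this
  -- formula for pd4 v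
  have h4 : ∀ p q r t : ℂ, pd4 (fun z₁ w₁ z₂ w₂ =>
      β₁ + ((starRingEnd ℂ) a₂ * z₁ + a₂ * w₁ + β₂) ^ 2
        + (z₁ + w₁ + z₂ / (2 * (starRingEnd ℂ) a₂) + w₂ / (2 * a₂) + β₃) ^ 2
        + g₃ (w₁ / (2 * (starRingEnd ℂ) a₂) + (starRingEnd ℂ) d₃ * w₂ + β₄)
        + g₄ (z₁ / (2 * a₂) + d₃ * z₂ + β₅)) p q r t =
      2 * (p + q + r / (2 * (starRingEnd ℂ) a₂) + t / (2 * a₂) + β₃) * (2 * a₂)⁻¹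
      + deriv g₃ (q / (2 * (starRingEnd ℂ) a₂) + (starRingEnd ℂ) d₃ * t + β₄)
          * (starRingEnd ℂ) d₃ := by
    intro p q r t
    unfold pd4
    have hB : HasDerivAt
        (fun s : ℂ => p + q + r / (2 * (starRingEnd ℂ) a₂) + s / (2 * a₂) + β₃)
        (2 * a₂)⁻¹ t := by
      simpa [div_eq_mul_inv] using
        (((hasDerivAt_id t).mul_const (2 * a₂)⁻¹).const_add
          (p + q + r / (2 * (starRingEnd ℂ) a₂))).add_const β₃
    have hC : HasDerivAt
        (fun s : ℂ => q / (2 * (starRingEnd ℂ) a₂) + (starRingEnd ℂ) d₃ * s + β₄)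
        ((starRingEnd ℂ) d₃) t := by
      simpa using (((hasDerivAt_id t).const_mul ((starRingEnd ℂ) d₃)).const_add
        (q / (2 * (starRingEnd ℂ) a₂))).add_const β₄
    have hG : HasDerivAt
        (fun s : ℂ => g₃ (q / (2 * (starRingEnd ℂ) a₂) + (starRingEnd ℂ) d₃ * s + β₄))
        (deriv g₃ (q / (2 * (starRingEnd ℂ) a₂) + (starRingEnd ℂ) d₃ * t + β₄)
          * (starRingEnd ℂ) d₃) t :=
      (hg₃'.differentiableAt.hasDerivAt).comp t hC
    have h := ((((hasDerivAt_const t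
        (β₁ + ((starRingEnd ℂ) a₂ * p + a₂ * q + β₂) ^ 2)).add
      (hasDerivAt_sq hB)).add hG).add_const (g₄ (p / (2 * a₂) + d₃ * r + β₅)))
    have := h.deriv
    simp only [zero_add] at this
    rw [show (fun s : ℂ =>
      β₁ + ((starRingEnd ℂ) a₂ * p + a₂ * q + β₂) ^ 2
        + (p + q + r / (2 * (starRingEnd ℂ) a₂) + s / (2 * a₂) + β₃) ^ 2
        + g₃ (q / (2 * (starRingEnd ℂ) a₂) + (starRingEnd ℂ) d₃ * s + β₄)
        + g₄ (p / (2 * a₂) + d₃ * r + β₅)) = _ from rfl]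
    exact this
  -- the four second partials
  have e12 : pd1 (pd2 (fun z₁ w₁ z₂ w₂ =>
      β₁ + ((starRingEnd ℂ) a₂ * z₁ + a₂ * w₁ + β₂) ^ 2
        + (z₁ + w₁ + z₂ / (2 * (starRingEnd ℂ) a₂) + w₂ / (2 * a₂) + β₃) ^ 2
        + g₃ (w₁ / (2 * (starRingEnd ℂ) a₂) + (starRingEnd ℂ) d₃ * w₂ + β₄)
        + g₄ (z₁ / (2 * a₂) + d₃ * z₂ + β₅))) z₁ w₁ z₂ w₂
      = 2 * (starRingEnd ℂ) a₂ * a₂ + 2 := by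
    unfold pd1
    have heq : (fun s => pd2 (fun z₁ w₁ z₂ w₂ =>
      β₁ + ((starRingEnd ℂ) a₂ * z₁ + a₂ * w₁ + β₂) ^ 2
        + (z₁ + w₁ + z₂ / (2 * (starRingEnd ℂ) a₂) + w₂ / (2 * a₂) + β₃) ^ 2
        + g₃ (w₁ / (2 * (starRingEnd ℂ) a₂) + (starRingEnd ℂ) d₃ * w₂ + β₄)
        + g₄ (z₁ / (2 * a₂) + d₃ * z₂ + β₅)) s w₁ z₂ w₂) = fun s =>
      2 * ((starRingEnd ℂ) a₂ * s + a₂ * w₁ + β₂) * a₂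
      + 2 * (s + w₁ + z₂ / (2 * (starRingEnd ℂ) a₂) + w₂ / (2 * a₂) + β₃)
      + deriv g₃ (w₁ / (2 * (starRingEnd ℂ) a₂) + (starRingEnd ℂ) d₃ * w₂ + β₄)
          * (2 * (starRingEnd ℂ) a₂)⁻¹ := funext fun s => h2 s w₁ z₂ w₂
    rw [heq]
    have hT1 : HasDerivAt (fun s : ℂ =>
        2 * ((starRingEnd ℂ) a₂ * s + a₂ * w₁ + β₂) * a₂)
        (2 * (starRingEnd ℂ) a₂ * a₂) z₁ := by
      have hA : HasDerivAt (fun s : ℂ => (starRingEnd ℂ) a₂ * s + a₂ * w₁ + β₂)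
          ((starRingEnd ℂ) a₂) z₁ := by
        simpa using (((hasDerivAt_id z₁).const_mul ((starRingEnd ℂ) a₂)).add_const
          (a₂ * w₁)).add_const β₂
      simpa [mul_assoc] using (hA.const_mul 2).mul_const a₂
    have hT2 : HasDerivAt (fun s : ℂ =>
        2 * (s + w₁ + z₂ / (2 * (starRingEnd ℂ) a₂) + w₂ / (2 * a₂) + β₃)) 2 z₁ := by
      have hB : HasDerivAt
          (fun s : ℂ => s + w₁ + z₂ / (2 * (starRingEnd ℂ) a₂) + w₂ / (2 * a₂) + β₃) 1 z₁ := by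
        simpa using ((((hasDerivAt_id z₁).add_const w₁).add_const
          (z₂ / (2 * (starRingEnd ℂ) a₂))).add_const (w₂ / (2 * a₂))).add_const β₃
      simpa using hB.const_mul 2
    have := ((hT1.add hT2).add_const
      (deriv g₃ (w₁ / (2 * (starRingEnd ℂ) a₂) + (starRingEnd ℂ) d₃ * w₂ + β₄)
          * (2 * (starRingEnd ℂ) a₂)⁻¹)).deriv
    exact this
  have e34 : pd3 (pd4 (fun z₁ w₁ z₂ w₂ =>
      β₁ + ((starRingEnd ℂ) a₂ * z₁ + a₂ * w₁ + β₂) ^ 2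
        + (z₁ + w₁ + z₂ / (2 * (starRingEnd ℂ) a₂) + w₂ / (2 * a₂) + β₃) ^ 2
        + g₃ (w₁ / (2 * (starRingEnd ℂ) a₂) + (starRingEnd ℂ) d₃ * w₂ + β₄)
        + g₄ (z₁ / (2 * a₂) + d₃ * z₂ + β₅))) z₁ w₁ z₂ w₂
      = 2 * (2 * (starRingEnd ℂ) a₂)⁻¹ * (2 * a₂)⁻¹ := by
    unfold pd3
    have heq : (fun s => pd4 (fun z₁ w₁ z₂ w₂ =>
      β₁ + ((starRingEnd ℂ) a₂ * z₁ + a₂ * w₁ + β₂) ^ 2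
        + (z₁ + w₁ + z₂ / (2 * (starRingEnd ℂ) a₂) + w₂ / (2 * a₂) + β₃) ^ 2
        + g₃ (w₁ / (2 * (starRingEnd ℂ) a₂) + (starRingEnd ℂ) d₃ * w₂ + β₄)
        + g₄ (z₁ / (2 * a₂) + d₃ * z₂ + β₅)) z₁ w₁ s w₂) = fun s =>
      2 * (z₁ + w₁ + s / (2 * (starRingEnd ℂ) a₂) + w₂ / (2 * a₂) + β₃) * (2 * a₂)⁻¹
      + deriv g₃ (w₁ / (2 * (starRingEnd ℂ) a₂) + (starRingEnd ℂ) d₃ * w₂ + β₄)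
          * (starRingEnd ℂ) d₃ := funext fun s => h4 z₁ w₁ s w₂
    rw [heq]
    have hB : HasDerivAt
        (fun s : ℂ => z₁ + w₁ + s / (2 * (starRingEnd ℂ) a₂) + w₂ / (2 * a₂) + β₃)
        (2 * (starRingEnd ℂ) a₂)⁻¹ z₂ := by
      simpa [div_eq_mul_inv] using
        ((((hasDerivAt_id z₂).mul_const (2 * (starRingEnd ℂ) a₂)⁻¹).const_add
          (z₁ + w₁)).add_const (w₂ / (2 * a₂))).add_const β₃
    have := (((hB.const_mul 2).mul_const (2 * a₂)⁻¹).add_const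
      (deriv g₃ (w₁ / (2 * (starRingEnd ℂ) a₂) + (starRingEnd ℂ) d₃ * w₂ + β₄)
          * (starRingEnd ℂ) d₃)).deriv
    rw [this]
  have e14 : pd1 (pd4 (fun z₁ w₁ z₂ w₂ =>
      β₁ + ((starRingEnd ℂ) a₂ * z₁ + a₂ * w₁ + β₂) ^ 2
        + (z₁ + w₁ + z₂ / (2 * (starRingEnd ℂ) a₂) + w₂ / (2 * a₂) + β₃) ^ 2
        + g₃ (w₁ / (2 * (starRingEnd ℂ) a₂) + (starRingEnd ℂ) d₃ * w₂ + β₄)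
        + g₄ (z₁ / (2 * a₂) + d₃ * z₂ + β₅))) z₁ w₁ z₂ w₂
      = 2 * (2 * a₂)⁻¹ := by
    unfold pd1
    have heq : (fun s => pd4 (fun z₁ w₁ z₂ w₂ =>
      β₁ + ((starRingEnd ℂ) a₂ * z₁ + a₂ * w₁ + β₂) ^ 2
        + (z₁ + w₁ + z₂ / (2 * (starRingEnd ℂ) a₂) + w₂ / (2 * a₂) + β₃) ^ 2
        + g₃ (w₁ / (2 * (starRingEnd ℂ) a₂) + (starRingEnd ℂ) d₃ * w₂ + β₄)
        + g₄ (z₁ / (2 * a₂) + d₃ * z₂ + β₅)) s w₁ z₂ w₂) = fun s =>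
      2 * (s + w₁ + z₂ / (2 * (starRingEnd ℂ) a₂) + w₂ / (2 * a₂) + β₃) * (2 * a₂)⁻¹
      + deriv g₃ (w₁ / (2 * (starRingEnd ℂ) a₂) + (starRingEnd ℂ) d₃ * w₂ + β₄)
          * (starRingEnd ℂ) d₃ := funext fun s => h4 s w₁ z₂ w₂
    rw [heq]
    have hB : HasDerivAt
        (fun s : ℂ => s + w₁ + z₂ / (2 * (starRingEnd ℂ) a₂) + w₂ / (2 * a₂) + β₃) 1 z₁ := by
      simpa using ((((hasDerivAt_id z₁).add_const w₁).add_const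
        (z₂ / (2 * (starRingEnd ℂ) a₂))).add_const (w₂ / (2 * a₂))).add_const β₃
    have := (((hB.const_mul 2).mul_const (2 * a₂)⁻¹).add_const
      (deriv g₃ (w₁ / (2 * (starRingEnd ℂ) a₂) + (starRingEnd ℂ) d₃ * w₂ + β₄)
          * (starRingEnd ℂ) d₃)).deriv
    rw [this]
    ring
  have e32 : pd3 (pd2 (fun z₁ w₁ z₂ w₂ =>
      β₁ + ((starRingEnd ℂ) a₂ * z₁ + a₂ * w₁ + β₂) ^ 2
        + (z₁ + w₁ + z₂ / (2 * (starRingEnd ℂ) a₂) + w₂ / (2 * a₂) + β₃) ^ 2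
        + g₃ (w₁ / (2 * (starRingEnd ℂ) a₂) + (starRingEnd ℂ) d₃ * w₂ + β₄)
        + g₄ (z₁ / (2 * a₂) + d₃ * z₂ + β₅))) z₁ w₁ z₂ w₂
      = 2 * (2 * (starRingEnd ℂ) a₂)⁻¹ := by
    unfold pd3
    have heq : (fun s => pd2 (fun z₁ w₁ z₂ w₂ =>
      β₁ + ((starRingEnd ℂ) a₂ * z₁ + a₂ * w₁ + β₂) ^ 2
        + (z₁ + w₁ + z₂ / (2 * (starRingEnd ℂ) a₂) + w₂ / (2 * a₂) + β₃) ^ 2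
        + g₃ (w₁ / (2 * (starRingEnd ℂ) a₂) + (starRingEnd ℂ) d₃ * w₂ + β₄)
        + g₄ (z₁ / (2 * a₂) + d₃ * z₂ + β₅)) z₁ w₁ s w₂) = fun s =>
      2 * ((starRingEnd ℂ) a₂ * z₁ + a₂ * w₁ + β₂) * a₂
      + 2 * (z₁ + w₁ + s / (2 * (starRingEnd ℂ) a₂) + w₂ / (2 * a₂) + β₃)
      + deriv g₃ (w₁ / (2 * (starRingEnd ℂ) a₂) + (starRingEnd ℂ) d₃ * w₂ + β₄)
          * (2 * (starRingEnd ℂ) a₂)⁻¹ := funext fun s => h2 z₁ w₁ s w₂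
    rw [heq]
    have hB : HasDerivAt
        (fun s : ℂ => z₁ + w₁ + s / (2 * (starRingEnd ℂ) a₂) + w₂ / (2 * a₂) + β₃)
        (2 * (starRingEnd ℂ) a₂)⁻¹ z₂ := by
      simpa [div_eq_mul_inv] using
        ((((hasDerivAt_id z₂).mul_const (2 * (starRingEnd ℂ) a₂)⁻¹).const_add
          (z₁ + w₁)).add_const (w₂ / (2 * a₂))).add_const β₃
    have := (((hB.const_mul 2).const_add
        (2 * ((starRingEnd ℂ) a₂ * z₁ + a₂ * w₁ + β₂) * a₂)).add_const
      (deriv g₃ (w₁ / (2 * (starRingEnd ℂ) a₂) + (starRingEnd ℂ) d₃ * w₂ + β₄)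
          * (2 * (starRingEnd ℂ) a₂)⁻¹)).deriv
    rw [this]
  rw [e12, e34, e14, e32]
  field_simp
  ring
end

section
/- Let A, a₂, d₁, d₂, d₄ ∈ ℝ with d₁·d₂ ≠ 0, let β₁,…,β₅ ∈ ℂ, and let g₁, g₂, g₃, g₄ : ℂ → ℂ be twice differentiable. Set a₃ = −a₂(d₁d₂ − d₂² − d₁d₄)/(d₁d₂), c₃ = −iA(d₁d₂ + d₂² + d₁d₄)/(d₁d₂), d₃ = −(d₁² − d₂² − d₁d₄)/d₂, and define u : ℂ⁴ → ℂ (variables (p,q,z,w)) by u = β₁ + g₁(a₂p + a₂q + a₃z + a₃w + β₂) + g₂(d₂p + d₁q + d₄z + d₃w + β₃) + g₃(−iAp + iAq + c₃z − c₃w + β₄) + g₄(d₁p + d₂q + d₃z + d₄w + β₅). Then u satisfies u_{pq}u_{zw} − u_{pw}u_{qz} − (u_{pq})² + u_{pp}u_{qq} = 0 at every point (class I of solutions of the Legendre-transformed hyperbolic complex Monge–Ampère equation). -/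
private lemma hda_aff (g : ℂ → ℂ) (hg : Differentiable ℂ g) (c e t : ℂ) :
    HasDerivAt (fun s => g (c * s + e)) (c * deriv g (c * t + e)) t := by
  have h1 : HasDerivAt (fun s : ℂ => c * s + e) c t := by
    simpa using ((hasDerivAt_id t).const_mul c).add_const e
  have h2 := (hg (c * t + e)).hasDerivAt.comp t h1
  rw [mul_comm] at h2; exact h2

private lemma hda_of_eq (g : ℂ → ℂ) (hg : Differentiable ℂ g) (c e t y : ℂ)
    (F : ℂ → ℂ) (hF : ∀ s, F s = c * s + e) (hy : y = c * t + e) :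
    HasDerivAt (fun s => g (F s)) (c * deriv g y) t := by
  have h : (fun s => g (F s)) = fun s => g (c * s + e) := by
    funext s; rw [hF]
  rw [h, hy]; exact hda_aff g hg c e t

private lemma master (g₁ g₂ g₃ g₄ : ℂ → ℂ)
    (h₁ : Differentiable ℂ g₁) (h₂ : Differentiable ℂ g₂)
    (h₃ : Differentiable ℂ g₃) (h₄ : Differentiable ℂ g₄)
    (h₁' : Differentiable ℂ (deriv g₁)) (h₂' : Differentiable ℂ (deriv g₂))
    (h₃' : Differentiable ℂ (deriv g₃)) (h₄' : Differentiable ℂ (deriv g₄))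
    (β c₁ k₁ e₁ c₂ k₂ e₂ c₃ k₃ e₃ c₄ k₄ e₄ x y L₁ L₂ L₃ L₄ : ℂ)
    (F₁ F₂ F₃ F₄ : ℂ → ℂ → ℂ)
    (hF₁ : ∀ s t, F₁ s t = c₁ * s + k₁ * t + e₁)
    (hF₂ : ∀ s t, F₂ s t = c₂ * s + k₂ * t + e₂)
    (hF₃ : ∀ s t, F₃ s t = c₃ * s + k₃ * t + e₃)
    (hF₄ : ∀ s t, F₄ s t = c₄ * s + k₄ * t + e₄)
    (hL₁ : L₁ = c₁ * x + k₁ * y + e₁) (hL₂ : L₂ = c₂ * x + k₂ * y + e₂)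
    (hL₃ : L₃ = c₃ * x + k₃ * y + e₃) (hL₄ : L₄ = c₄ * x + k₄ * y + e₄) :
    deriv (fun s => deriv (fun t =>
        β + g₁ (F₁ s t) + g₂ (F₂ s t) + g₃ (F₃ s t) + g₄ (F₄ s t)) y) x
      = k₁ * (c₁ * deriv (deriv g₁) L₁) + k₂ * (c₂ * deriv (deriv g₂) L₂)
        + k₃ * (c₃ * deriv (deriv g₃) L₃) + k₄ * (c₄ * deriv (deriv g₄) L₄) := by
  have hstep : (fun s => deriv (fun t =>
      β + g₁ (F₁ s t) + g₂ (F₂ s t) + g₃ (F₃ s t) + g₄ (F₄ s t)) y)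
      = fun s => k₁ * deriv g₁ (c₁ * s + (k₁ * y + e₁))
        + k₂ * deriv g₂ (c₂ * s + (k₂ * y + e₂))
        + k₃ * deriv g₃ (c₃ * s + (k₃ * y + e₃))
        + k₄ * deriv g₄ (c₄ * s + (k₄ * y + e₄)) := by
    funext s
    have d1 : HasDerivAt (fun t => g₁ (F₁ s t))
        (k₁ * deriv g₁ (c₁ * s + (k₁ * y + e₁))) y :=
      hda_of_eq g₁ h₁ k₁ (c₁ * s + e₁) y (c₁ * s + (k₁ * y + e₁))
        (fun t => F₁ s t) (fun t => by simp only [hF₁]; ring) (by ring)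
    have d2 : HasDerivAt (fun t => g₂ (F₂ s t))
        (k₂ * deriv g₂ (c₂ * s + (k₂ * y + e₂))) y :=
      hda_of_eq g₂ h₂ k₂ (c₂ * s + e₂) y (c₂ * s + (k₂ * y + e₂))
        (fun t => F₂ s t) (fun t => by simp only [hF₂]; ring) (by ring)
    have d3 : HasDerivAt (fun t => g₃ (F₃ s t))
        (k₃ * deriv g₃ (c₃ * s + (k₃ * y + e₃))) y :=
      hda_of_eq g₃ h₃ k₃ (c₃ * s + e₃) y (c₃ * s + (k₃ * y + e₃))
        (fun t => F₃ s t) (fun t => by simp only [hF₃]; ring) (by ring)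
    have d4 : HasDerivAt (fun t => g₄ (F₄ s t))
        (k₄ * deriv g₄ (c₄ * s + (k₄ * y + e₄))) y :=
      hda_of_eq g₄ h₄ k₄ (c₄ * s + e₄) y (c₄ * s + (k₄ * y + e₄))
        (fun t => F₄ s t) (fun t => by simp only [hF₄]; ring) (by ring)
    have hh := (((((hasDerivAt_const y β).add d1).add d2).add d3).add d4).deriv
    rw [zero_add] at hh; exact hh
  rw [hstep, hL₁, hL₂, hL₃, hL₄]
  have o1 : HasDerivAt (fun s => k₁ * deriv g₁ (c₁ * s + (k₁ * y + e₁)))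
      (k₁ * (c₁ * deriv (deriv g₁) (c₁ * x + k₁ * y + e₁))) x :=
    (hda_of_eq (deriv g₁) h₁' c₁ (k₁ * y + e₁) x (c₁ * x + k₁ * y + e₁)
      (fun s => c₁ * s + (k₁ * y + e₁)) (fun s => rfl) (by ring)).const_mul k₁
  have o2 : HasDerivAt (fun s => k₂ * deriv g₂ (c₂ * s + (k₂ * y + e₂)))
      (k₂ * (c₂ * deriv (deriv g₂) (c₂ * x + k₂ * y + e₂))) x :=
    (hda_of_eq (deriv g₂) h₂' c₂ (k₂ * y + e₂) x (c₂ * x + k₂ * y + e₂)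
      (fun s => c₂ * s + (k₂ * y + e₂)) (fun s => rfl) (by ring)).const_mul k₂
  have o3 : HasDerivAt (fun s => k₃ * deriv g₃ (c₃ * s + (k₃ * y + e₃)))
      (k₃ * (c₃ * deriv (deriv g₃) (c₃ * x + k₃ * y + e₃))) x :=
    (hda_of_eq (deriv g₃) h₃' c₃ (k₃ * y + e₃) x (c₃ * x + k₃ * y + e₃)
      (fun s => c₃ * s + (k₃ * y + e₃)) (fun s => rfl) (by ring)).const_mul k₃
  have o4 : HasDerivAt (fun s => k₄ * deriv g₄ (c₄ * s + (k₄ * y + e₄)))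
      (k₄ * (c₄ * deriv (deriv g₄) (c₄ * x + k₄ * y + e₄))) x :=
    (hda_of_eq (deriv g₄) h₄' c₄ (k₄ * y + e₄) x (c₄ * x + k₄ * y + e₄)
      (fun s => c₄ * s + (k₄ * y + e₄)) (fun s => rfl) (by ring)).const_mul k₄
  exact (((o1.add o2).add o3).add o4).deriv

private lemma masterP (g₁ g₂ g₃ g₄ : ℂ → ℂ)
    (h₁ : Differentiable ℂ g₁) (h₂ : Differentiable ℂ g₂)
    (h₃ : Differentiable ℂ g₃) (h₄ : Differentiable ℂ g₄)
    (h₁' : Differentiable ℂ (deriv g₁)) (h₂' : Differentiable ℂ (deriv g₂))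
    (h₃' : Differentiable ℂ (deriv g₃)) (h₄' : Differentiable ℂ (deriv g₄))
    (β c₁ e₁ c₂ e₂ c₃ e₃ c₄ e₄ x L₁ L₂ L₃ L₄ : ℂ)
    (F₁ F₂ F₃ F₄ : ℂ → ℂ)
    (hF₁ : ∀ t, F₁ t = c₁ * t + e₁) (hF₂ : ∀ t, F₂ t = c₂ * t + e₂)
    (hF₃ : ∀ t, F₃ t = c₃ * t + e₃) (hF₄ : ∀ t, F₄ t = c₄ * t + e₄)
    (hL₁ : L₁ = c₁ * x + e₁) (hL₂ : L₂ = c₂ * x + e₂)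
    (hL₃ : L₃ = c₃ * x + e₃) (hL₄ : L₄ = c₄ * x + e₄) :
    deriv (fun s => deriv (fun t =>
        β + g₁ (F₁ t) + g₂ (F₂ t) + g₃ (F₃ t) + g₄ (F₄ t)) s) x
      = c₁ * (c₁ * deriv (deriv g₁) L₁) + c₂ * (c₂ * deriv (deriv g₂) L₂)
        + c₃ * (c₃ * deriv (deriv g₃) L₃) + c₄ * (c₄ * deriv (deriv g₄) L₄) := by
  have hstep : (fun s => deriv (fun t =>
      β + g₁ (F₁ t) + g₂ (F₂ t) + g₃ (F₃ t) + g₄ (F₄ t)) s)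
      = fun s => c₁ * deriv g₁ (c₁ * s + e₁) + c₂ * deriv g₂ (c₂ * s + e₂)
        + c₃ * deriv g₃ (c₃ * s + e₃) + c₄ * deriv g₄ (c₄ * s + e₄) := by
    funext s
    have d1 : HasDerivAt (fun t => g₁ (F₁ t)) (c₁ * deriv g₁ (c₁ * s + e₁)) s :=
      hda_of_eq g₁ h₁ c₁ e₁ s (c₁ * s + e₁) F₁ hF₁ rfl
    have d2 : HasDerivAt (fun t => g₂ (F₂ t)) (c₂ * deriv g₂ (c₂ * s + e₂)) s :=
      hda_of_eq g₂ h₂ c₂ e₂ s (c₂ * s + e₂) F₂ hF₂ rfl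
    have d3 : HasDerivAt (fun t => g₃ (F₃ t)) (c₃ * deriv g₃ (c₃ * s + e₃)) s :=
      hda_of_eq g₃ h₃ c₃ e₃ s (c₃ * s + e₃) F₃ hF₃ rfl
    have d4 : HasDerivAt (fun t => g₄ (F₄ t)) (c₄ * deriv g₄ (c₄ * s + e₄)) s :=
      hda_of_eq g₄ h₄ c₄ e₄ s (c₄ * s + e₄) F₄ hF₄ rfl
    have hh := (((((hasDerivAt_const s β).add d1).add d2).add d3).add d4).deriv
    rw [zero_add] at hh; exact hh
  rw [hstep, hL₁, hL₂, hL₃, hL₄]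
  have o1 : HasDerivAt (fun s => c₁ * deriv g₁ (c₁ * s + e₁))
      (c₁ * (c₁ * deriv (deriv g₁) (c₁ * x + e₁))) x :=
    (hda_aff (deriv g₁) h₁' c₁ e₁ x).const_mul c₁
  have o2 : HasDerivAt (fun s => c₂ * deriv g₂ (c₂ * s + e₂))
      (c₂ * (c₂ * deriv (deriv g₂) (c₂ * x + e₂))) x :=
    (hda_aff (deriv g₂) h₂' c₂ e₂ x).const_mul c₂
  have o3 : HasDerivAt (fun s => c₃ * deriv g₃ (c₃ * s + e₃))
      (c₃ * (c₃ * deriv (deriv g₃) (c₃ * x + e₃))) x :=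
    (hda_aff (deriv g₃) h₃' c₃ e₃ x).const_mul c₃
  have o4 : HasDerivAt (fun s => c₄ * deriv g₄ (c₄ * s + e₄))
      (c₄ * (c₄ * deriv (deriv g₄) (c₄ * x + e₄))) x :=
    (hda_aff (deriv g₄) h₄' c₄ e₄ x).const_mul c₄
  exact (((o1.add o2).add o3).add o4).deriv

set_option maxHeartbeats 1000000 in
/-- class I of solutions of the Legendre-transformed hyperbolic
complex Monge–Ampère equation. -/
theorem stmt3 (A a₂ d₁ d₂ d₄ : ℝ) (hd : d₁ * d₂ ≠ 0) (β₁ β₂ β₃ β₄ β₅ : ℂ)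
    (g₁ g₂ g₃ g₄ : ℂ → ℂ)
    (hg₁ : ContDiff ℂ 2 g₁) (hg₂ : ContDiff ℂ 2 g₂)
    (hg₃ : ContDiff ℂ 2 g₃) (hg₄ : ContDiff ℂ 2 g₄)
    (a₃ d₃ : ℝ) (c₃ : ℂ)
    (ha₃ : a₃ = -a₂ * (d₁ * d₂ - d₂ ^ 2 - d₁ * d₄) / (d₁ * d₂))
    (hc₃ : c₃ = -Complex.I * (A : ℂ) * ((d₁ : ℂ) * d₂ + (d₂ : ℂ) ^ 2 + (d₁ : ℂ) * d₄)
        / ((d₁ : ℂ) * d₂))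
    (hd₃ : d₃ = -(d₁ ^ 2 - d₂ ^ 2 - d₁ * d₄) / d₂)
    (u : ℂ → ℂ → ℂ → ℂ → ℂ)
    (hu : u = fun p q z w =>
      β₁ + g₁ ((a₂ : ℂ) * p + (a₂ : ℂ) * q + (a₃ : ℂ) * z + (a₃ : ℂ) * w + β₂)
        + g₂ ((d₂ : ℂ) * p + (d₁ : ℂ) * q + (d₄ : ℂ) * z + (d₃ : ℂ) * w + β₃)
        + g₃ (-Complex.I * (A : ℂ) * p + Complex.I * (A : ℂ) * q + c₃ * z - c₃ * w + β₄)
        + g₄ ((d₁ : ℂ) * p + (d₂ : ℂ) * q + (d₃ : ℂ) * z + (d₄ : ℂ) * w + β₅)) :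
    ∀ p q z w : ℂ,
      pd1 (pd2 u) p q z w * pd3 (pd4 u) p q z w
        - pd1 (pd4 u) p q z w * pd2 (pd3 u) p q z w
        - (pd1 (pd2 u) p q z w) ^ 2
        + pd1 (pd1 u) p q z w * pd2 (pd2 u) p q z w = 0 := by
  intro p q z w
  have h₁ : Differentiable ℂ g₁ := hg₁.differentiable (by norm_num)
  have h₂ : Differentiable ℂ g₂ := hg₂.differentiable (by norm_num)
  have h₃ : Differentiable ℂ g₃ := hg₃.differentiable (by norm_num)
  have h₄ : Differentiable ℂ g₄ := hg₄.differentiable (by norm_num)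
  have h₁' : Differentiable ℂ (deriv g₁) :=
    ((contDiff_succ_iff_deriv.mp (by exact_mod_cast hg₁ :
      ContDiff ℂ ((1:ℕ)+1) g₁)).2.2).differentiable (by norm_num)
  have h₂' : Differentiable ℂ (deriv g₂) :=
    ((contDiff_succ_iff_deriv.mp (by exact_mod_cast hg₂ :
      ContDiff ℂ ((1:ℕ)+1) g₂)).2.2).differentiable (by norm_num)
  have h₃' : Differentiable ℂ (deriv g₃) :=
    ((contDiff_succ_iff_deriv.mp (by exact_mod_cast hg₃ :
      ContDiff ℂ ((1:ℕ)+1) g₃)).2.2).differentiable (by norm_num)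
  have h₄' : Differentiable ℂ (deriv g₄) :=
    ((contDiff_succ_iff_deriv.mp (by exact_mod_cast hg₄ :
      ContDiff ℂ ((1:ℕ)+1) g₄)).2.2).differentiable (by norm_num)
  have H12 : pd1 (pd2 u) p q z w =
      (a₂:ℂ) * ((a₂:ℂ) * deriv (deriv g₁) ((a₂:ℂ) * p + (a₂:ℂ) * q + (a₃:ℂ) * z + (a₃:ℂ) * w + β₂))
        + (d₁:ℂ) * ((d₂:ℂ) * deriv (deriv g₂) ((d₂:ℂ) * p + (d₁:ℂ) * q + (d₄:ℂ) * z + (d₃:ℂ) * w + β₃))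
        + (Complex.I*(A:ℂ)) * ((-Complex.I*(A:ℂ)) * deriv (deriv g₃) (-Complex.I * (A:ℂ) * p + Complex.I * (A:ℂ) * q + c₃ * z - c₃ * w + β₄))
        + (d₂:ℂ) * ((d₁:ℂ) * deriv (deriv g₄) ((d₁:ℂ) * p + (d₂:ℂ) * q + (d₃:ℂ) * z + (d₄:ℂ) * w + β₅)) := by
    rw [hu]; simp only [pd1, pd2]
    exact master g₁ g₂ g₃ g₄ h₁ h₂ h₃ h₄ h₁' h₂' h₃' h₄' β₁
        (a₂:ℂ) (a₂:ℂ) ((a₃:ℂ) * z + (a₃:ℂ) * w + β₂)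
        (d₂:ℂ) (d₁:ℂ) ((d₄:ℂ) * z + (d₃:ℂ) * w + β₃)
        (-Complex.I*(A:ℂ)) (Complex.I*(A:ℂ)) (c₃ * z + (-c₃) * w + β₄)
        (d₁:ℂ) (d₂:ℂ) ((d₃:ℂ) * z + (d₄:ℂ) * w + β₅)
        p q
        ((a₂:ℂ) * p + (a₂:ℂ) * q + (a₃:ℂ) * z + (a₃:ℂ) * w + β₂)
        ((d₂:ℂ) * p + (d₁:ℂ) * q + (d₄:ℂ) * z + (d₃:ℂ) * w + β₃)
        (-Complex.I * (A:ℂ) * p + Complex.I * (A:ℂ) * q + c₃ * z - c₃ * w + β₄)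
        ((d₁:ℂ) * p + (d₂:ℂ) * q + (d₃:ℂ) * z + (d₄:ℂ) * w + β₅)
        (fun s t => (a₂:ℂ) * s + (a₂:ℂ) * t + (a₃:ℂ) * z + (a₃:ℂ) * w + β₂) (fun s t => (d₂:ℂ) * s + (d₁:ℂ) * t + (d₄:ℂ) * z + (d₃:ℂ) * w + β₃) (fun s t => -Complex.I * (A:ℂ) * s + Complex.I * (A:ℂ) * t + c₃ * z - c₃ * w + β₄) (fun s t => (d₁:ℂ) * s + (d₂:ℂ) * t + (d₃:ℂ) * z + (d₄:ℂ) * w + β₅)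
        (fun s t => by ring) (fun s t => by ring) (fun s t => by ring) (fun s t => by ring)
        (by ring) (by ring) (by ring) (by ring)
  have H34 : pd3 (pd4 u) p q z w =
      (a₃:ℂ) * ((a₃:ℂ) * deriv (deriv g₁) ((a₂:ℂ) * p + (a₂:ℂ) * q + (a₃:ℂ) * z + (a₃:ℂ) * w + β₂))
        + (d₃:ℂ) * ((d₄:ℂ) * deriv (deriv g₂) ((d₂:ℂ) * p + (d₁:ℂ) * q + (d₄:ℂ) * z + (d₃:ℂ) * w + β₃))
        + (-c₃) * (c₃ * deriv (deriv g₃) (-Complex.I * (A:ℂ) * p + Complex.I * (A:ℂ) * q + c₃ * z - c₃ * w + β₄))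
        + (d₄:ℂ) * ((d₃:ℂ) * deriv (deriv g₄) ((d₁:ℂ) * p + (d₂:ℂ) * q + (d₃:ℂ) * z + (d₄:ℂ) * w + β₅)) := by
    rw [hu]; simp only [pd3, pd4]
    exact master g₁ g₂ g₃ g₄ h₁ h₂ h₃ h₄ h₁' h₂' h₃' h₄' β₁
        (a₃:ℂ) (a₃:ℂ) ((a₂:ℂ) * p + (a₂:ℂ) * q + β₂)
        (d₄:ℂ) (d₃:ℂ) ((d₂:ℂ) * p + (d₁:ℂ) * q + β₃)
        c₃ (-c₃) ((-Complex.I*(A:ℂ)) * p + (Complex.I*(A:ℂ)) * q + β₄)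
        (d₃:ℂ) (d₄:ℂ) ((d₁:ℂ) * p + (d₂:ℂ) * q + β₅)
        z w
        ((a₂:ℂ) * p + (a₂:ℂ) * q + (a₃:ℂ) * z + (a₃:ℂ) * w + β₂)
        ((d₂:ℂ) * p + (d₁:ℂ) * q + (d₄:ℂ) * z + (d₃:ℂ) * w + β₃)
        (-Complex.I * (A:ℂ) * p + Complex.I * (A:ℂ) * q + c₃ * z - c₃ * w + β₄)
        ((d₁:ℂ) * p + (d₂:ℂ) * q + (d₃:ℂ) * z + (d₄:ℂ) * w + β₅)
        (fun s t => (a₂:ℂ) * p + (a₂:ℂ) * q + (a₃:ℂ) * s + (a₃:ℂ) * t + β₂) (fun s t => (d₂:ℂ) * p + (d₁:ℂ) * q + (d₄:ℂ) * s + (d₃:ℂ) * t + β₃) (fun s t => -Complex.I * (A:ℂ) * p + Complex.I * (A:ℂ) * q + c₃ * s - c₃ * t + β₄) (fun s t => (d₁:ℂ) * p + (d₂:ℂ) * q + (d₃:ℂ) * s + (d₄:ℂ) * t + β₅)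
        (fun s t => by ring) (fun s t => by ring) (fun s t => by ring) (fun s t => by ring)
        (by ring) (by ring) (by ring) (by ring)
  have H14 : pd1 (pd4 u) p q z w =
      (a₃:ℂ) * ((a₂:ℂ) * deriv (deriv g₁) ((a₂:ℂ) * p + (a₂:ℂ) * q + (a₃:ℂ) * z + (a₃:ℂ) * w + β₂))
        + (d₃:ℂ) * ((d₂:ℂ) * deriv (deriv g₂) ((d₂:ℂ) * p + (d₁:ℂ) * q + (d₄:ℂ) * z + (d₃:ℂ) * w + β₃))
        + (-c₃) * ((-Complex.I*(A:ℂ)) * deriv (deriv g₃) (-Complex.I * (A:ℂ) * p + Complex.I * (A:ℂ) * q + c₃ * z - c₃ * w + β₄))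
        + (d₄:ℂ) * ((d₁:ℂ) * deriv (deriv g₄) ((d₁:ℂ) * p + (d₂:ℂ) * q + (d₃:ℂ) * z + (d₄:ℂ) * w + β₅)) := by
    rw [hu]; simp only [pd1, pd4]
    exact master g₁ g₂ g₃ g₄ h₁ h₂ h₃ h₄ h₁' h₂' h₃' h₄' β₁
        (a₂:ℂ) (a₃:ℂ) ((a₂:ℂ) * q + (a₃:ℂ) * z + β₂)
        (d₂:ℂ) (d₃:ℂ) ((d₁:ℂ) * q + (d₄:ℂ) * z + β₃)
        (-Complex.I*(A:ℂ)) (-c₃) ((Complex.I*(A:ℂ)) * q + c₃ * z + β₄)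
        (d₁:ℂ) (d₄:ℂ) ((d₂:ℂ) * q + (d₃:ℂ) * z + β₅)
        p w
        ((a₂:ℂ) * p + (a₂:ℂ) * q + (a₃:ℂ) * z + (a₃:ℂ) * w + β₂)
        ((d₂:ℂ) * p + (d₁:ℂ) * q + (d₄:ℂ) * z + (d₃:ℂ) * w + β₃)
        (-Complex.I * (A:ℂ) * p + Complex.I * (A:ℂ) * q + c₃ * z - c₃ * w + β₄)
        ((d₁:ℂ) * p + (d₂:ℂ) * q + (d₃:ℂ) * z + (d₄:ℂ) * w + β₅)
        (fun s t => (a₂:ℂ) * s + (a₂:ℂ) * q + (a₃:ℂ) * z + (a₃:ℂ) * t + β₂) (fun s t => (d₂:ℂ) * s + (d₁:ℂ) * q + (d₄:ℂ) * z + (d₃:ℂ) * t + β₃) (fun s t => -Complex.I * (A:ℂ) * s + Complex.I * (A:ℂ) * q + c₃ * z - c₃ * t + β₄) (fun s t => (d₁:ℂ) * s + (d₂:ℂ) * q + (d₃:ℂ) * z + (d₄:ℂ) * t + β₅)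
        (fun s t => by ring) (fun s t => by ring) (fun s t => by ring) (fun s t => by ring)
        (by ring) (by ring) (by ring) (by ring)
  have H23 : pd2 (pd3 u) p q z w =
      (a₃:ℂ) * ((a₂:ℂ) * deriv (deriv g₁) ((a₂:ℂ) * p + (a₂:ℂ) * q + (a₃:ℂ) * z + (a₃:ℂ) * w + β₂))
        + (d₄:ℂ) * ((d₁:ℂ) * deriv (deriv g₂) ((d₂:ℂ) * p + (d₁:ℂ) * q + (d₄:ℂ) * z + (d₃:ℂ) * w + β₃))
        + c₃ * ((Complex.I*(A:ℂ)) * deriv (deriv g₃) (-Complex.I * (A:ℂ) * p + Complex.I * (A:ℂ) * q + c₃ * z - c₃ * w + β₄))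
        + (d₃:ℂ) * ((d₂:ℂ) * deriv (deriv g₄) ((d₁:ℂ) * p + (d₂:ℂ) * q + (d₃:ℂ) * z + (d₄:ℂ) * w + β₅)) := by
    rw [hu]; simp only [pd2, pd3]
    exact master g₁ g₂ g₃ g₄ h₁ h₂ h₃ h₄ h₁' h₂' h₃' h₄' β₁
        (a₂:ℂ) (a₃:ℂ) ((a₂:ℂ) * p + (a₃:ℂ) * w + β₂)
        (d₁:ℂ) (d₄:ℂ) ((d₂:ℂ) * p + (d₃:ℂ) * w + β₃)
        (Complex.I*(A:ℂ)) c₃ ((-Complex.I*(A:ℂ)) * p + (-c₃) * w + β₄)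
        (d₂:ℂ) (d₃:ℂ) ((d₁:ℂ) * p + (d₄:ℂ) * w + β₅)
        q z
        ((a₂:ℂ) * p + (a₂:ℂ) * q + (a₃:ℂ) * z + (a₃:ℂ) * w + β₂)
        ((d₂:ℂ) * p + (d₁:ℂ) * q + (d₄:ℂ) * z + (d₃:ℂ) * w + β₃)
        (-Complex.I * (A:ℂ) * p + Complex.I * (A:ℂ) * q + c₃ * z - c₃ * w + β₄)
        ((d₁:ℂ) * p + (d₂:ℂ) * q + (d₃:ℂ) * z + (d₄:ℂ) * w + β₅)
        (fun s t => (a₂:ℂ) * p + (a₂:ℂ) * s + (a₃:ℂ) * t + (a₃:ℂ) * w + β₂) (fun s t => (d₂:ℂ) * p + (d₁:ℂ) * s + (d₄:ℂ) * t + (d₃:ℂ) * w + β₃) (fun s t => -Complex.I * (A:ℂ) * p + Complex.I * (A:ℂ) * s + c₃ * t - c₃ * w + β₄) (fun s t => (d₁:ℂ) * p + (d₂:ℂ) * s + (d₃:ℂ) * t + (d₄:ℂ) * w + β₅)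
        (fun s t => by ring) (fun s t => by ring) (fun s t => by ring) (fun s t => by ring)
        (by ring) (by ring) (by ring) (by ring)
  have H11 : pd1 (pd1 u) p q z w =
      (a₂:ℂ) * ((a₂:ℂ) * deriv (deriv g₁) ((a₂:ℂ) * p + (a₂:ℂ) * q + (a₃:ℂ) * z + (a₃:ℂ) * w + β₂))
        + (d₂:ℂ) * ((d₂:ℂ) * deriv (deriv g₂) ((d₂:ℂ) * p + (d₁:ℂ) * q + (d₄:ℂ) * z + (d₃:ℂ) * w + β₃))
        + (-Complex.I*(A:ℂ)) * ((-Complex.I*(A:ℂ)) * deriv (deriv g₃) (-Complex.I * (A:ℂ) * p + Complex.I * (A:ℂ) * q + c₃ * z - c₃ * w + β₄))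
        + (d₁:ℂ) * ((d₁:ℂ) * deriv (deriv g₄) ((d₁:ℂ) * p + (d₂:ℂ) * q + (d₃:ℂ) * z + (d₄:ℂ) * w + β₅)) := by
    rw [hu]; simp only [pd1]
    exact masterP g₁ g₂ g₃ g₄ h₁ h₂ h₃ h₄ h₁' h₂' h₃' h₄' β₁
        (a₂:ℂ) ((a₂:ℂ) * q + (a₃:ℂ) * z + (a₃:ℂ) * w + β₂)
        (d₂:ℂ) ((d₁:ℂ) * q + (d₄:ℂ) * z + (d₃:ℂ) * w + β₃)
        (-Complex.I*(A:ℂ)) ((Complex.I*(A:ℂ)) * q + c₃ * z + (-c₃) * w + β₄)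
        (d₁:ℂ) ((d₂:ℂ) * q + (d₃:ℂ) * z + (d₄:ℂ) * w + β₅)
        p
        ((a₂:ℂ) * p + (a₂:ℂ) * q + (a₃:ℂ) * z + (a₃:ℂ) * w + β₂)
        ((d₂:ℂ) * p + (d₁:ℂ) * q + (d₄:ℂ) * z + (d₃:ℂ) * w + β₃)
        (-Complex.I * (A:ℂ) * p + Complex.I * (A:ℂ) * q + c₃ * z - c₃ * w + β₄)
        ((d₁:ℂ) * p + (d₂:ℂ) * q + (d₃:ℂ) * z + (d₄:ℂ) * w + β₅)
        (fun t => (a₂:ℂ) * t + (a₂:ℂ) * q + (a₃:ℂ) * z + (a₃:ℂ) * w + β₂) (fun t => (d₂:ℂ) * t + (d₁:ℂ) * q + (d₄:ℂ) * z + (d₃:ℂ) * w + β₃) (fun t => -Complex.I * (A:ℂ) * t + Complex.I * (A:ℂ) * q + c₃ * z - c₃ * w + β₄) (fun t => (d₁:ℂ) * t + (d₂:ℂ) * q + (d₃:ℂ) * z + (d₄:ℂ) * w + β₅)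
        (fun t => by ring) (fun t => by ring) (fun t => by ring) (fun t => by ring)
        (by ring) (by ring) (by ring) (by ring)
  have H22 : pd2 (pd2 u) p q z w =
      (a₂:ℂ) * ((a₂:ℂ) * deriv (deriv g₁) ((a₂:ℂ) * p + (a₂:ℂ) * q + (a₃:ℂ) * z + (a₃:ℂ) * w + β₂))
        + (d₁:ℂ) * ((d₁:ℂ) * deriv (deriv g₂) ((d₂:ℂ) * p + (d₁:ℂ) * q + (d₄:ℂ) * z + (d₃:ℂ) * w + β₃))
        + (Complex.I*(A:ℂ)) * ((Complex.I*(A:ℂ)) * deriv (deriv g₃) (-Complex.I * (A:ℂ) * p + Complex.I * (A:ℂ) * q + c₃ * z - c₃ * w + β₄))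
        + (d₂:ℂ) * ((d₂:ℂ) * deriv (deriv g₄) ((d₁:ℂ) * p + (d₂:ℂ) * q + (d₃:ℂ) * z + (d₄:ℂ) * w + β₅)) := by
    rw [hu]; simp only [pd2]
    exact masterP g₁ g₂ g₃ g₄ h₁ h₂ h₃ h₄ h₁' h₂' h₃' h₄' β₁
        (a₂:ℂ) ((a₂:ℂ) * p + (a₃:ℂ) * z + (a₃:ℂ) * w + β₂)
        (d₁:ℂ) ((d₂:ℂ) * p + (d₄:ℂ) * z + (d₃:ℂ) * w + β₃)
        (Complex.I*(A:ℂ)) ((-Complex.I*(A:ℂ)) * p + c₃ * z + (-c₃) * w + β₄)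
        (d₂:ℂ) ((d₁:ℂ) * p + (d₃:ℂ) * z + (d₄:ℂ) * w + β₅)
        q
        ((a₂:ℂ) * p + (a₂:ℂ) * q + (a₃:ℂ) * z + (a₃:ℂ) * w + β₂)
        ((d₂:ℂ) * p + (d₁:ℂ) * q + (d₄:ℂ) * z + (d₃:ℂ) * w + β₃)
        (-Complex.I * (A:ℂ) * p + Complex.I * (A:ℂ) * q + c₃ * z - c₃ * w + β₄)
        ((d₁:ℂ) * p + (d₂:ℂ) * q + (d₃:ℂ) * z + (d₄:ℂ) * w + β₅)
        (fun t => (a₂:ℂ) * p + (a₂:ℂ) * t + (a₃:ℂ) * z + (a₃:ℂ) * w + β₂) (fun t => (d₂:ℂ) * p + (d₁:ℂ) * t + (d₄:ℂ) * z + (d₃:ℂ) * w + β₃) (fun t => -Complex.I * (A:ℂ) * p + Complex.I * (A:ℂ) * t + c₃ * z - c₃ * w + β₄) (fun t => (d₁:ℂ) * p + (d₂:ℂ) * t + (d₃:ℂ) * z + (d₄:ℂ) * w + β₅)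
        (fun t => by ring) (fun t => by ring) (fun t => by ring) (fun t => by ring)
        (by ring) (by ring) (by ring) (by ring)
  rw [H12, H34, H14, H23, H11, H22]
  generalize deriv (deriv g₁) ((a₂:ℂ) * p + (a₂:ℂ) * q + (a₃:ℂ) * z + (a₃:ℂ) * w + β₂) = G1
  generalize deriv (deriv g₂) ((d₂:ℂ) * p + (d₁:ℂ) * q + (d₄:ℂ) * z + (d₃:ℂ) * w + β₃) = G2
  generalize deriv (deriv g₃) (-Complex.I * (A:ℂ) * p + Complex.I * (A:ℂ) * q + c₃ * z - c₃ * w + β₄) = G3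
  generalize deriv (deriv g₄) ((d₁:ℂ) * p + (d₂:ℂ) * q + (d₃:ℂ) * z + (d₄:ℂ) * w + β₅) = G4
  have hdr := mul_ne_zero_iff.mp hd
  have hd1 : (d₁:ℂ) ≠ 0 := Complex.ofReal_ne_zero.mpr hdr.1
  have hd2 : (d₂:ℂ) ≠ 0 := Complex.ofReal_ne_zero.mpr hdr.2
  have hD : (d₁:ℂ) * (d₂:ℂ) ≠ 0 := mul_ne_zero hd1 hd2
  have hAr : a₃ * (d₁ * d₂) = -a₂ * (d₁ * d₂ - d₂ ^ 2 - d₁ * d₄) := by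
    rw [ha₃]; exact div_mul_cancel₀ _ hd
  have hDr : d₃ * d₂ = -(d₁ ^ 2 - d₂ ^ 2 - d₁ * d₄) := by
    rw [hd₃]; exact div_mul_cancel₀ _ hdr.2
  have hA := congrArg (Complex.ofReal) hAr
  push_cast at hA
  have hDc := congrArg (Complex.ofReal) hDr
  push_cast at hDc
  have hC : c₃ * ((d₁:ℂ) * (d₂:ℂ)) =
      -Complex.I * (A:ℂ) * ((d₁:ℂ) * d₂ + (d₂:ℂ)^2 + (d₁:ℂ) * d₄) := by
    rw [hc₃]; exact div_mul_cancel₀ _ hD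
  apply mul_left_cancel₀ (mul_ne_zero (pow_ne_zero 4 hD) (pow_ne_zero 2 hd2))
  linear_combination
    ((-1) * (d₁:ℂ)^3 * (d₂:ℂ)^5 * (A:ℂ)^2 * Complex.I^2 * G1 * G3 * (a₃:ℂ) + (d₁:ℂ)^4 * (d₂:ℂ)^6 * G1 * G4 * (a₃:ℂ) + (d₁:ℂ)^4 * (d₂:ℂ)^6 * G1 * G2 * (a₃:ℂ) + (-1) * (a₂:ℂ) * (d₁:ℂ)^2 * (d₂:ℂ)^6 * (A:ℂ)^2 * Complex.I^2 * G1 * G3 + (-1) * (a₂:ℂ) * (d₁:ℂ)^3 * (d₂:ℂ)^4 * (d₄:ℂ) * (A:ℂ)^2 * Complex.I^2 * G1 * G3 + (-2) * (a₂:ℂ) * (d₁:ℂ)^3 * (d₂:ℂ)^5 * (A:ℂ) * Complex.I * G1 * G3 * c₃ + (a₂:ℂ) * (d₁:ℂ)^3 * (d₂:ℂ)^5 * (A:ℂ)^2 * Complex.I^2 * G1 * G3 + (-1) * (a₂:ℂ) * (d₁:ℂ)^3 * (d₂:ℂ)^6 * G1 * G4 * (d₃:ℂ) + (-1) * (a₂:ℂ)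 * (d₁:ℂ)^3 * (d₂:ℂ)^6 * G1 * G2 * (d₃:ℂ) + (a₂:ℂ) * (d₁:ℂ)^3 * (d₂:ℂ)^7 * G1 * G4 + (a₂:ℂ) * (d₁:ℂ)^3 * (d₂:ℂ)^7 * G1 * G2 + (-1) * (a₂:ℂ) * (d₁:ℂ)^4 * (d₂:ℂ)^6 * G1 * G4 + (-1) * (a₂:ℂ) * (d₁:ℂ)^4 * (d₂:ℂ)^6 * G1 * G2) * hA
    + ((-1) * (d₁:ℂ)^3 * (d₂:ℂ)^6 * (A:ℂ) * Complex.I * G3 * G4 * (d₃:ℂ) + (-1) * (d₁:ℂ)^3 * (d₂:ℂ)^6 * (A:ℂ) * Complex.I * G2 * G3 * (d₃:ℂ) + (d₁:ℂ)^3 * (d₂:ℂ)^7 * (A:ℂ) * Complex.I * G3 * G4 + (d₁:ℂ)^3 * (d₂:ℂ)^7 * (A:ℂ) * Complex.I * G2 * G3 + (-1) * (d₁:ℂ)^4 * (d₂:ℂ)^6 * G3 * G4 * c₃ + (-1) * (d₁:ℂ)^4 * (d₂:ℂ)^6 * G2 * G3 * c₃ + (d₁:ℂ)^4 * (d₂:ℂ)^6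 * (A:ℂ) * Complex.I * G3 * G4 + (d₁:ℂ)^4 * (d₂:ℂ)^6 * (A:ℂ) * Complex.I * G2 * G3 + (-1) * (a₂:ℂ)^2 * (d₁:ℂ)^2 * (d₂:ℂ)^6 * (A:ℂ) * Complex.I * G1 * G3 + (-1) * (a₂:ℂ)^2 * (d₁:ℂ)^3 * (d₂:ℂ)^4 * (d₄:ℂ) * (A:ℂ) * Complex.I * G1 * G3 + (-1) * (a₂:ℂ)^2 * (d₁:ℂ)^3 * (d₂:ℂ)^5 * G1 * G3 * c₃ + (3) * (a₂:ℂ)^2 * (d₁:ℂ)^3 * (d₂:ℂ)^5 * (A:ℂ) * Complex.I * G1 * G3) * hC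
    + ((d₁:ℂ)^3 * (d₂:ℂ)^7 * (A:ℂ)^2 * Complex.I^2 * G3 * G4 + (d₁:ℂ)^3 * (d₂:ℂ)^7 * (A:ℂ)^2 * Complex.I^2 * G2 * G3 + (d₁:ℂ)^4 * (d₂:ℂ)^6 * (A:ℂ)^2 * Complex.I^2 * G3 * G4 + (d₁:ℂ)^4 * (d₂:ℂ)^6 * (A:ℂ)^2 * Complex.I^2 * G2 * G3 + (-1) * (d₁:ℂ)^4 * (d₂:ℂ)^7 * G2 * G4 * (d₃:ℂ) + (-1) * (d₁:ℂ)^4 * (d₂:ℂ)^8 * G2 * G4 + (d₁:ℂ)^5 * (d₂:ℂ)^6 * (d₄:ℂ) * G2 * G4 + (d₁:ℂ)^6 * (d₂:ℂ)^6 * G2 * G4 + (-1) * (a₂:ℂ)^2 * (d₁:ℂ)^3 * (d₂:ℂ)^7 * G1 * G4 + (-1) * (a₂:ℂ)^2 * (d₁:ℂ)^3 * (d₂:ℂ)^7 * G1 * G2 + (a₂:ℂ)^2 * (d₁:ℂ)^4 * (d₂:ℂ)^6 * G1 * G4 + (a₂:ℂ)^2 * (d₁:ℂ)^4 * (d₂:ℂ)^6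 * G1 * G2) * hDc
end

section
/- Let a₄, b₄ ∈ ℂ, d₃, d₄ ∈ ℝ, β₁,…,β₅ ∈ ℂ, and let g₁, g₂, g₃, g₄ : ℂ → ℂ be twice differentiable. Define u : ℂ⁴ → ℂ (variables (p,q,z,w)) by u = β₁ + g₁(conj(a₄)·z + a₄·w + β₂) + g₂(conj(b₄)·z + b₄·w + β₃) + g₃(d₄q + d₄z + d₃w + β₄) + g₄(d₄p + d₃z + d₄w + β₅). Then u satisfies u_{pq}u_{zw} − u_{pw}u_{qz} − (u_{pq})² + u_{pp}u_{qq} = 0 at every point (class II of solutions of the Legendre-transformed hyperbolic complex Monge–Ampère equation). -/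
private lemma diff_of_contDiff2 (g : ℂ → ℂ) (hg : ContDiff ℂ 2 g) :
    Differentiable ℂ g :=
  hg.differentiable (by norm_num)

private lemma diff_deriv_of_contDiff2 (g : ℂ → ℂ) (hg : ContDiff ℂ 2 g) :
    Differentiable ℂ (deriv g) := by
  have := (contDiff_succ_iff_deriv.mp
    (show ContDiff ℂ (1+1) g by norm_num at hg ⊢; exact hg)).2.2
  exact this.differentiable (by norm_num)

private lemma hasDerivAt_affine_comp (f : ℂ → ℂ) (hf : Differentiable ℂ f)
    (a b x : ℂ) :
    HasDerivAt (fun s => f (a * s + b)) (a * deriv f (a * x + b)) x := by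
  have h : HasDerivAt (fun s : ℂ => a * s + b) a x := by
    simpa using ((hasDerivAt_id x).const_mul a).add_const b
  have H := ((hf (a * x + b)).hasDerivAt).comp x h
  rw [mul_comm] at H
  exact H

/-- derivative of `k + f₁(a₁s+b₁) + f₂(a₂s+b₂) + f₃(a₃s+b₃) + f₄(a₄s+b₄)`. -/
private lemma deriv_four (f₁ f₂ f₃ f₄ : ℂ → ℂ)
    (h₁ : Differentiable ℂ f₁) (h₂ : Differentiable ℂ f₂)
    (h₃ : Differentiable ℂ f₃) (h₄ : Differentiable ℂ f₄)
    (k a₁ b₁ a₂ b₂ a₃ b₃ a₄ b₄ x : ℂ) :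
    deriv (fun s => k + f₁ (a₁ * s + b₁) + f₂ (a₂ * s + b₂)
        + f₃ (a₃ * s + b₃) + f₄ (a₄ * s + b₄)) x
      = a₁ * deriv f₁ (a₁ * x + b₁) + a₂ * deriv f₂ (a₂ * x + b₂)
        + a₃ * deriv f₃ (a₃ * x + b₃) + a₄ * deriv f₄ (a₄ * x + b₄) := by
  have H := (((((hasDerivAt_const x k).add
      (hasDerivAt_affine_comp f₁ h₁ a₁ b₁ x)).add
      (hasDerivAt_affine_comp f₂ h₂ a₂ b₂ x)).add
      (hasDerivAt_affine_comp f₃ h₃ a₃ b₃ x)).add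
      (hasDerivAt_affine_comp f₄ h₄ a₄ b₄ x))
  rw [zero_add] at H
  exact H.deriv

/-- derivative of `k + c * f (a*s+b)`. -/
private lemma deriv_const_add_mul (f : ℂ → ℂ) (hf : Differentiable ℂ f)
    (k c a b x : ℂ) :
    deriv (fun s => k + c * f (a * s + b)) x = c * (a * deriv f (a * x + b)) := by
  have H := (hasDerivAt_const x k).add
    ((hasDerivAt_affine_comp f hf a b x).const_mul c)
  rw [zero_add] at H
  exact H.deriv

/-- derivative of `k + c * f (a*s+b) + k₂`. -/
private lemma deriv_const_add_mul_add (f : ℂ → ℂ) (hf : Differentiable ℂ f)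
    (k c a b k₂ x : ℂ) :
    deriv (fun s => k + c * f (a * s + b) + k₂) x
      = c * (a * deriv f (a * x + b)) := by
  have H := ((hasDerivAt_const x k).add
    ((hasDerivAt_affine_comp f hf a b x).const_mul c)).add_const k₂
  simpa using H.deriv

/-- class II of solutions of the Legendre-transformed hyperbolic
complex Monge–Ampère equation. -/
theorem stmt4 (a₄ b₄ : ℂ) (d₃ d₄ : ℝ) (β₁ β₂ β₃ β₄ β₅ : ℂ)
    (g₁ g₂ g₃ g₄ : ℂ → ℂ)
    (hg₁ : ContDiff ℂ 2 g₁) (hg₂ : ContDiff ℂ 2 g₂)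
    (hg₃ : ContDiff ℂ 2 g₃) (hg₄ : ContDiff ℂ 2 g₄)
    (u : ℂ → ℂ → ℂ → ℂ → ℂ)
    (hu : u = fun p q z w =>
      β₁ + g₁ ((starRingEnd ℂ) a₄ * z + a₄ * w + β₂)
        + g₂ ((starRingEnd ℂ) b₄ * z + b₄ * w + β₃)
        + g₃ ((d₄ : ℂ) * q + (d₄ : ℂ) * z + (d₃ : ℂ) * w + β₄)
        + g₄ ((d₄ : ℂ) * p + (d₃ : ℂ) * z + (d₄ : ℂ) * w + β₅)) :
    ∀ p q z w : ℂ,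
      pd1 (pd2 u) p q z w * pd3 (pd4 u) p q z w
        - pd1 (pd4 u) p q z w * pd2 (pd3 u) p q z w
        - (pd1 (pd2 u) p q z w) ^ 2
        + pd1 (pd1 u) p q z w * pd2 (pd2 u) p q z w = 0 := by
  have D1 := diff_of_contDiff2 g₁ hg₁
  have D2 := diff_of_contDiff2 g₂ hg₂
  have D3 := diff_of_contDiff2 g₃ hg₃
  have D4 := diff_of_contDiff2 g₄ hg₄
  have D3' := diff_deriv_of_contDiff2 g₃ hg₃
  have D4' := diff_deriv_of_contDiff2 g₄ hg₄
  subst hu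
  -- first partial derivatives
  have hpd1 : ∀ p q z w : ℂ, pd1 (fun p q z w =>
      β₁ + g₁ ((starRingEnd ℂ) a₄ * z + a₄ * w + β₂)
        + g₂ ((starRingEnd ℂ) b₄ * z + b₄ * w + β₃)
        + g₃ ((d₄ : ℂ) * q + (d₄ : ℂ) * z + (d₃ : ℂ) * w + β₄)
        + g₄ ((d₄ : ℂ) * p + (d₃ : ℂ) * z + (d₄ : ℂ) * w + β₅)) p q z w
      = (d₄ : ℂ) * deriv g₄ ((d₄ : ℂ) * p + ((d₃ : ℂ) * z + (d₄ : ℂ) * w + β₅)) := by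
    intro p q z w
    have e : (fun s : ℂ =>
        β₁ + g₁ ((starRingEnd ℂ) a₄ * z + a₄ * w + β₂)
          + g₂ ((starRingEnd ℂ) b₄ * z + b₄ * w + β₃)
          + g₃ ((d₄ : ℂ) * q + (d₄ : ℂ) * z + (d₃ : ℂ) * w + β₄)
          + g₄ ((d₄ : ℂ) * s + (d₃ : ℂ) * z + (d₄ : ℂ) * w + β₅))
        = (fun s : ℂ =>
        β₁ + g₁ (0 * s + ((starRingEnd ℂ) a₄ * z + a₄ * w + β₂))
          + g₂ (0 * s + ((starRingEnd ℂ) b₄ * z + b₄ * w + β₃))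
          + g₃ (0 * s + ((d₄ : ℂ) * q + (d₄ : ℂ) * z + (d₃ : ℂ) * w + β₄))
          + g₄ ((d₄ : ℂ) * s + ((d₃ : ℂ) * z + (d₄ : ℂ) * w + β₅))) := by
      funext s; ring_nf
    rw [pd1, e, deriv_four g₁ g₂ g₃ g₄ D1 D2 D3 D4]
    simp
  have hpd2 : ∀ p q z w : ℂ, pd2 (fun p q z w =>
      β₁ + g₁ ((starRingEnd ℂ) a₄ * z + a₄ * w + β₂)
        + g₂ ((starRingEnd ℂ) b₄ * z + b₄ * w + β₃)
        + g₃ ((d₄ : ℂ) * q + (d₄ : ℂ) * z + (d₃ : ℂ) * w + β₄)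
        + g₄ ((d₄ : ℂ) * p + (d₃ : ℂ) * z + (d₄ : ℂ) * w + β₅)) p q z w
      = (d₄ : ℂ) * deriv g₃ ((d₄ : ℂ) * q + ((d₄ : ℂ) * z + (d₃ : ℂ) * w + β₄)) := by
    intro p q z w
    have e : (fun s : ℂ =>
        β₁ + g₁ ((starRingEnd ℂ) a₄ * z + a₄ * w + β₂)
          + g₂ ((starRingEnd ℂ) b₄ * z + b₄ * w + β₃)
          + g₃ ((d₄ : ℂ) * s + (d₄ : ℂ) * z + (d₃ : ℂ) * w + β₄)
          + g₄ ((d₄ : ℂ) * p + (d₃ : ℂ) * z + (d₄ : ℂ) * w + β₅))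
        = (fun s : ℂ =>
        β₁ + g₁ (0 * s + ((starRingEnd ℂ) a₄ * z + a₄ * w + β₂))
          + g₂ (0 * s + ((starRingEnd ℂ) b₄ * z + b₄ * w + β₃))
          + g₃ ((d₄ : ℂ) * s + ((d₄ : ℂ) * z + (d₃ : ℂ) * w + β₄))
          + g₄ (0 * s + ((d₄ : ℂ) * p + (d₃ : ℂ) * z + (d₄ : ℂ) * w + β₅))) := by
      funext s; ring_nf
    rw [pd2, e, deriv_four g₁ g₂ g₃ g₄ D1 D2 D3 D4]
    simp
  have hpd3 : ∀ p q z w : ℂ, pd3 (fun p q z w =>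
      β₁ + g₁ ((starRingEnd ℂ) a₄ * z + a₄ * w + β₂)
        + g₂ ((starRingEnd ℂ) b₄ * z + b₄ * w + β₃)
        + g₃ ((d₄ : ℂ) * q + (d₄ : ℂ) * z + (d₃ : ℂ) * w + β₄)
        + g₄ ((d₄ : ℂ) * p + (d₃ : ℂ) * z + (d₄ : ℂ) * w + β₅)) p q z w
      = (starRingEnd ℂ) a₄ * deriv g₁ ((starRingEnd ℂ) a₄ * z + (a₄ * w + β₂))
        + (starRingEnd ℂ) b₄ * deriv g₂ ((starRingEnd ℂ) b₄ * z + (b₄ * w + β₃))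
        + (d₄ : ℂ) * deriv g₃ ((d₄ : ℂ) * z + ((d₄ : ℂ) * q + (d₃ : ℂ) * w + β₄))
        + (d₃ : ℂ) * deriv g₄ ((d₃ : ℂ) * z + ((d₄ : ℂ) * p + (d₄ : ℂ) * w + β₅)) := by
    intro p q z w
    have e : (fun s : ℂ =>
        β₁ + g₁ ((starRingEnd ℂ) a₄ * s + a₄ * w + β₂)
          + g₂ ((starRingEnd ℂ) b₄ * s + b₄ * w + β₃)
          + g₃ ((d₄ : ℂ) * q + (d₄ : ℂ) * s + (d₃ : ℂ) * w + β₄)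
          + g₄ ((d₄ : ℂ) * p + (d₃ : ℂ) * s + (d₄ : ℂ) * w + β₅))
        = (fun s : ℂ =>
        β₁ + g₁ ((starRingEnd ℂ) a₄ * s + (a₄ * w + β₂))
          + g₂ ((starRingEnd ℂ) b₄ * s + (b₄ * w + β₃))
          + g₃ ((d₄ : ℂ) * s + ((d₄ : ℂ) * q + (d₃ : ℂ) * w + β₄))
          + g₄ ((d₃ : ℂ) * s + ((d₄ : ℂ) * p + (d₄ : ℂ) * w + β₅))) := by
      funext s; ring_nf
    rw [pd3, e, deriv_four g₁ g₂ g₃ g₄ D1 D2 D3 D4]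
  have hpd4 : ∀ p q z w : ℂ, pd4 (fun p q z w =>
      β₁ + g₁ ((starRingEnd ℂ) a₄ * z + a₄ * w + β₂)
        + g₂ ((starRingEnd ℂ) b₄ * z + b₄ * w + β₃)
        + g₃ ((d₄ : ℂ) * q + (d₄ : ℂ) * z + (d₃ : ℂ) * w + β₄)
        + g₄ ((d₄ : ℂ) * p + (d₃ : ℂ) * z + (d₄ : ℂ) * w + β₅)) p q z w
      = a₄ * deriv g₁ (a₄ * w + ((starRingEnd ℂ) a₄ * z + β₂))
        + b₄ * deriv g₂ (b₄ * w + ((starRingEnd ℂ) b₄ * z + β₃))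
        + (d₃ : ℂ) * deriv g₃ ((d₃ : ℂ) * w + ((d₄ : ℂ) * q + (d₄ : ℂ) * z + β₄))
        + (d₄ : ℂ) * deriv g₄ ((d₄ : ℂ) * w + ((d₄ : ℂ) * p + (d₃ : ℂ) * z + β₅)) := by
    intro p q z w
    have e : (fun s : ℂ =>
        β₁ + g₁ ((starRingEnd ℂ) a₄ * z + a₄ * s + β₂)
          + g₂ ((starRingEnd ℂ) b₄ * z + b₄ * s + β₃)
          + g₃ ((d₄ : ℂ) * q + (d₄ : ℂ) * z + (d₃ : ℂ) * s + β₄)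
          + g₄ ((d₄ : ℂ) * p + (d₃ : ℂ) * z + (d₄ : ℂ) * s + β₅))
        = (fun s : ℂ =>
        β₁ + g₁ (a₄ * s + ((starRingEnd ℂ) a₄ * z + β₂))
          + g₂ (b₄ * s + ((starRingEnd ℂ) b₄ * z + β₃))
          + g₃ ((d₃ : ℂ) * s + ((d₄ : ℂ) * q + (d₄ : ℂ) * z + β₄))
          + g₄ ((d₄ : ℂ) * s + ((d₄ : ℂ) * p + (d₃ : ℂ) * z + β₅))) := by
      funext s; ring_nf
    rw [pd4, e, deriv_four g₁ g₂ g₃ g₄ D1 D2 D3 D4]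
  intro p q z w
  -- second partial derivatives
  have T12 : pd1 (pd2 (fun p q z w =>
      β₁ + g₁ ((starRingEnd ℂ) a₄ * z + a₄ * w + β₂)
        + g₂ ((starRingEnd ℂ) b₄ * z + b₄ * w + β₃)
        + g₃ ((d₄ : ℂ) * q + (d₄ : ℂ) * z + (d₃ : ℂ) * w + β₄)
        + g₄ ((d₄ : ℂ) * p + (d₃ : ℂ) * z + (d₄ : ℂ) * w + β₅))) p q z w = 0 := by
    rw [pd1, show (fun s => pd2 _ s q z w)
        = (fun _ : ℂ => (d₄ : ℂ) * deriv g₃ ((d₄ : ℂ) * q + ((d₄ : ℂ) * z + (d₃ : ℂ) * w + β₄)))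
      from funext fun s => hpd2 s q z w]
    exact deriv_const _ _
  have T11 : pd1 (pd1 (fun p q z w =>
      β₁ + g₁ ((starRingEnd ℂ) a₄ * z + a₄ * w + β₂)
        + g₂ ((starRingEnd ℂ) b₄ * z + b₄ * w + β₃)
        + g₃ ((d₄ : ℂ) * q + (d₄ : ℂ) * z + (d₃ : ℂ) * w + β₄)
        + g₄ ((d₄ : ℂ) * p + (d₃ : ℂ) * z + (d₄ : ℂ) * w + β₅))) p q z w
      = (d₄ : ℂ) * ((d₄ : ℂ) * deriv (deriv g₄)
          ((d₄ : ℂ) * p + ((d₃ : ℂ) * z + (d₄ : ℂ) * w + β₅))) := by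
    rw [pd1, show (fun s => pd1 _ s q z w)
        = (fun s : ℂ => 0 + (d₄ : ℂ) * deriv g₄ ((d₄ : ℂ) * s + ((d₃ : ℂ) * z + (d₄ : ℂ) * w + β₅)))
      from funext fun s => by rw [hpd1 s q z w, zero_add]]
    rw [deriv_const_add_mul (deriv g₄) D4']
  have T22 : pd2 (pd2 (fun p q z w =>
      β₁ + g₁ ((starRingEnd ℂ) a₄ * z + a₄ * w + β₂)
        + g₂ ((starRingEnd ℂ) b₄ * z + b₄ * w + β₃)
        + g₃ ((d₄ : ℂ) * q + (d₄ : ℂ) * z + (d₃ : ℂ) * w + β₄)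
        + g₄ ((d₄ : ℂ) * p + (d₃ : ℂ) * z + (d₄ : ℂ) * w + β₅))) p q z w
      = (d₄ : ℂ) * ((d₄ : ℂ) * deriv (deriv g₃)
          ((d₄ : ℂ) * q + ((d₄ : ℂ) * z + (d₃ : ℂ) * w + β₄))) := by
    rw [pd2, show (fun s => pd2 _ p s z w)
        = (fun s : ℂ => 0 + (d₄ : ℂ) * deriv g₃ ((d₄ : ℂ) * s + ((d₄ : ℂ) * z + (d₃ : ℂ) * w + β₄)))
      from funext fun s => by rw [hpd2 p s z w, zero_add]]
    rw [deriv_const_add_mul (deriv g₃) D3']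
  have T14 : pd1 (pd4 (fun p q z w =>
      β₁ + g₁ ((starRingEnd ℂ) a₄ * z + a₄ * w + β₂)
        + g₂ ((starRingEnd ℂ) b₄ * z + b₄ * w + β₃)
        + g₃ ((d₄ : ℂ) * q + (d₄ : ℂ) * z + (d₃ : ℂ) * w + β₄)
        + g₄ ((d₄ : ℂ) * p + (d₃ : ℂ) * z + (d₄ : ℂ) * w + β₅))) p q z w
      = (d₄ : ℂ) * ((d₄ : ℂ) * deriv (deriv g₄)
          ((d₄ : ℂ) * p + ((d₄ : ℂ) * w + (d₃ : ℂ) * z + β₅))) := by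
    rw [pd1, show (fun s => pd4 _ s q z w)
        = (fun s : ℂ => (a₄ * deriv g₁ (a₄ * w + ((starRingEnd ℂ) a₄ * z + β₂))
          + b₄ * deriv g₂ (b₄ * w + ((starRingEnd ℂ) b₄ * z + β₃))
          + (d₃ : ℂ) * deriv g₃ ((d₃ : ℂ) * w + ((d₄ : ℂ) * q + (d₄ : ℂ) * z + β₄)))
          + (d₄ : ℂ) * deriv g₄ ((d₄ : ℂ) * s + ((d₄ : ℂ) * w + (d₃ : ℂ) * z + β₅)))
      from funext fun s => by rw [hpd4 s q z w]; ring_nf]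
    rw [deriv_const_add_mul (deriv g₄) D4']
  have T23 : pd2 (pd3 (fun p q z w =>
      β₁ + g₁ ((starRingEnd ℂ) a₄ * z + a₄ * w + β₂)
        + g₂ ((starRingEnd ℂ) b₄ * z + b₄ * w + β₃)
        + g₃ ((d₄ : ℂ) * q + (d₄ : ℂ) * z + (d₃ : ℂ) * w + β₄)
        + g₄ ((d₄ : ℂ) * p + (d₃ : ℂ) * z + (d₄ : ℂ) * w + β₅))) p q z w
      = (d₄ : ℂ) * ((d₄ : ℂ) * deriv (deriv g₃)
          ((d₄ : ℂ) * q + ((d₄ : ℂ) * z + (d₃ : ℂ) * w + β₄))) := by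
    rw [pd2, show (fun s => pd3 _ p s z w)
        = (fun s : ℂ => ((starRingEnd ℂ) a₄ * deriv g₁ ((starRingEnd ℂ) a₄ * z + (a₄ * w + β₂))
          + (starRingEnd ℂ) b₄ * deriv g₂ ((starRingEnd ℂ) b₄ * z + (b₄ * w + β₃)))
          + (d₄ : ℂ) * deriv g₃ ((d₄ : ℂ) * s + ((d₄ : ℂ) * z + (d₃ : ℂ) * w + β₄))
          + (d₃ : ℂ) * deriv g₄ ((d₃ : ℂ) * z + ((d₄ : ℂ) * p + (d₄ : ℂ) * w + β₅)))
      from funext fun s => by rw [hpd3 p s z w]; ring_nf]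
    rw [deriv_const_add_mul_add (deriv g₃) D3']
  -- conclude
  rw [T12, T11, T22, T14, T23]
  have harg : (d₄ : ℂ) * p + ((d₄ : ℂ) * w + (d₃ : ℂ) * z + β₅)
      = (d₄ : ℂ) * p + ((d₃ : ℂ) * z + (d₄ : ℂ) * w + β₅) := by ring
  rw [harg]
  ring
end

section
/- Let A₂, B₃, B₄, C₂, H₂, β₁,…,β₅ ∈ ℝ with B₃ − B₄ + √(B₃² + B₄²) ≠ 0, set S = √(B₃² + B₄²) and b₁ = (S/2)·(1 + i·(B₃ + B₄ − S)/(B₃ − B₄ + S)), and let g₁, g₂, g₃, g₄ : ℂ → ℂ be twice differentiable. Define u : ℂ⁴ → ℂ (variables (p,q,z,w)) by u = β₁ + g₁(A₂(1+i)p + A₂(1−i)q + 2iA₂z − 2iA₂w + β₂) + g₂(b₁p + conj(b₁)q + (B₃+iB₄)z + (B₃−iB₄)w + β₃) + g₃(iC₂p − iC₂q + β₄) + g₄(H₂(−1+i)p + H₂(−1−i)q + 2iH₂z − 2iH₂w + β₅). Then u satisfies u_{pq}u_{zw} − u_{pw}u_{qz} − (u_{pq})² + u_{pp}u_{qq} =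 0 at every point (class III of solutions of the Legendre-transformed hyperbolic complex Monge–Ampère equation). -/
lemma derivSum (g₁ g₂ g₃ g₄ : ℂ → ℂ) (h₁ : Differentiable ℂ g₁) (h₂ : Differentiable ℂ g₂)
    (h₃ : Differentiable ℂ g₃) (h₄ : Differentiable ℂ g₄)
    (e₀ k₁ k₂ k₃ k₄ c₁ c₂ c₃ c₄ r₁ r₂ r₃ r₄ a : ℂ) :
    deriv (fun s => e₀ + k₁ * g₁ (c₁ * s + r₁) + k₂ * g₂ (c₂ * s + r₂)
        + k₃ * g₃ (c₃ * s + r₃) + k₄ * g₄ (c₄ * s + r₄)) a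
      = k₁ * c₁ * deriv g₁ (c₁ * a + r₁) + k₂ * c₂ * deriv g₂ (c₂ * a + r₂)
        + k₃ * c₃ * deriv g₃ (c₃ * a + r₃) + k₄ * c₄ * deriv g₄ (c₄ * a + r₄) := by
  have H : ∀ (g : ℂ → ℂ), Differentiable ℂ g → ∀ c r : ℂ,
      HasDerivAt (fun s => g (c * s + r)) (c * deriv g (c * a + r)) a := by
    intro g hg c r
    have h1 : HasDerivAt (fun s : ℂ => c * s + r) c a := by
      simpa using ((hasDerivAt_id a).const_mul c).add_const r
    have := ((hg (c * a + r)).hasDerivAt).comp a h1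
    have h2 : HasDerivAt (fun s => g (c * s + r)) (deriv g (c * a + r) * c) a := this
    rwa [mul_comm (deriv g (c * a + r)) c] at h2
  have big := (((((H g₁ h₁ c₁ r₁).const_mul k₁).const_add e₀).add
      ((H g₂ h₂ c₂ r₂).const_mul k₂)).add
      ((H g₃ h₃ c₃ r₃).const_mul k₃)).add
      ((H g₄ h₄ c₄ r₄).const_mul k₄)
  refine big.deriv.trans ?_; ring

lemma aux12 (a b cb s B3 B4 : ℂ) (hD : B3 - B4 + s ≠ 0)
    (hb : 2*(B3 - B4 + s)*b = s*((B3 - B4 + s) + Complex.I*(B3 + B4 - s)))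
    (hcb : 2*(B3 - B4 + s)*cb = s*((B3 - B4 + s) - Complex.I*(B3 + B4 - s)))
    (hs2 : s^2 = B3^2 + B4^2) :
    (1*B3^2*a^2 + (-1)*Complex.I^2*B4^2*a^2 + (-1)*Complex.I^2*B3^2*a^2 + 1*Complex.I^4*B4^2*a^2 + 2*cb*Complex.I*B3*a^2 + 2*cb*Complex.I^2*B4*a^2 + 2*cb*Complex.I^2*B3*a^2 + 2*cb*Complex.I^3*B4*a^2 + 1*cb^2*a^2 + 2*cb^2*Complex.I*a^2 + 1*cb^2*Complex.I^2*a^2 + (-2)*b*Complex.I*B3*a^2 + 2*b*Complex.I^2*B4*a^2 + 2*b*Complex.I^2*B3*a^2 + (-2)*b*Complex.I^3*B4*a^2 + (-2)*b*cb*a^2 + (-2)*b*cb*Complex.I^2*a^2 + 1*b^2*a^2 + (-2)*b^2*Complex.I*a^2 + 1*b^2*Complex.I^2*a^2) = 0 := by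
  have key : (2*(B3 - B4 + s))^2 * ((1*B3^2*a^2 + (-1)*Complex.I^2*B4^2*a^2 + (-1)*Complex.I^2*B3^2*a^2 + 1*Complex.I^4*B4^2*a^2 + 2*cb*Complex.I*B3*a^2 + 2*cb*Complex.I^2*B4*a^2 + 2*cb*Complex.I^2*B3*a^2 + 2*cb*Complex.I^3*B4*a^2 + 1*cb^2*a^2 + 2*cb^2*Complex.I*a^2 + 1*cb^2*Complex.I^2*a^2 + (-2)*b*Complex.I*B3*a^2 + 2*b*Complex.I^2*B4*a^2 + 2*b*Complex.I^2*B3*a^2 + (-2)*b*Complex.I^3*B4*a^2 + (-2)*b*cb*a^2 + (-2)*b*cb*Complex.I^2*a^2 + 1*b^2*a^2 + (-2)*b^2*Complex.I*a^2 + 1*b^2*Complex.I^2*a^2)) = 0 := by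
    linear_combination ((1*(B3 - B4 + s)*s*a^2 + 1*Complex.I*s*B4*a^2 + 1*Complex.I*s*B3*a^2 + (-1)*Complex.I*s^2*a^2 + (-4)*Complex.I*(B3 - B4 + s)*B3*a^2 + (-2)*Complex.I*(B3 - B4 + s)*s*a^2 + (-2)*Complex.I^2*s*B4*a^2 + (-2)*Complex.I^2*s*B3*a^2 + 2*Complex.I^2*s^2*a^2 + 4*Complex.I^2*(B3 - B4 + s)*B4*a^2 + 4*Complex.I^2*(B3 - B4 + s)*B3*a^2 + 1*Complex.I^2*(B3 - B4 + s)*s*a^2 + 1*Complex.I^3*s*B4*a^2 + 1*Complex.I^3*s*B3*a^2 + (-1)*Complex.I^3*s^2*a^2 + (-4)*Complex.I^3*(B3 - B4 + s)*B4*a^2 + (-4)*cb*(B3 - B4 + s)*a^2 + (-4)*cb*Complex.I^2*(B3 - B4 + s)*a^2 + 2*b*(B3 - B4 + s)*a^2 + (-4)*b*Complex.I*(B3 - B4 + s)*a^2 + 2*b*Complex.I^2*(B3 - B4 + s)*a^2))*hb + (((-1)*(B3 - B4 + s)*s*a^2 + (-3)*Complex.I*s*B4*a^2 + (-3)*Complex.I*s*B3*a^2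 + 3*Complex.I*s^2*a^2 + 4*Complex.I*(B3 - B4 + s)*B3*a^2 + 2*Complex.I*(B3 - B4 + s)*s*a^2 + (-2)*Complex.I^2*s*B4*a^2 + (-2)*Complex.I^2*s*B3*a^2 + 2*Complex.I^2*s^2*a^2 + 4*Complex.I^2*(B3 - B4 + s)*B4*a^2 + 4*Complex.I^2*(B3 - B4 + s)*B3*a^2 + (-1)*Complex.I^2*(B3 - B4 + s)*s*a^2 + (-3)*Complex.I^3*s*B4*a^2 + (-3)*Complex.I^3*s*B3*a^2 + 3*Complex.I^3*s^2*a^2 + 4*Complex.I^3*(B3 - B4 + s)*B4*a^2 + 2*cb*(B3 - B4 + s)*a^2 + 4*cb*Complex.I*(B3 - B4 + s)*a^2 + 2*cb*Complex.I^2*(B3 - B4 + s)*a^2))*hcb + ((8*(B3 - B4 + s)*s*B4^2*a^2 + (-8)*(B3 - B4 + s)*s*B3^2*a^2 + (-16)*(B3 - B4 + s)*s^2*B4*a^2 + 8*(B3 - B4 + s)*s^3*a^2 + (-8)*(B3 - B4 + s)^2*B4^2*a^2 + (-4)*(B3 - B4 + s)^2*B3^2*a^2 + 8*(B3 - B4 +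 s)^2*s*B4*a^2 + 8*(B3 - B4 + s)^2*s*B3*a^2 + 4*Complex.I^2*s^2*B4^2*a^2 + 8*Complex.I^2*s^2*B3*B4*a^2 + 4*Complex.I^2*s^2*B3^2*a^2 + (-8)*Complex.I^2*s^3*B4*a^2 + (-8)*Complex.I^2*s^3*B3*a^2 + 4*Complex.I^2*s^4*a^2 + (-8)*Complex.I^2*(B3 - B4 + s)*s*B4^2*a^2 + (-8)*Complex.I^2*(B3 - B4 + s)*s*B3*B4*a^2 + 8*Complex.I^2*(B3 - B4 + s)*s^2*B4*a^2 + 4*Complex.I^2*(B3 - B4 + s)^2*B4^2*a^2))*Complex.I_sq + ((8*(B3 - B4 + s)*B4*a^2 + (-8)*(B3 - B4 + s)*B3*a^2 + (-8)*(B3 - B4 + s)*s*a^2))*hs2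
  rcases mul_eq_zero.mp key with h|h
  · exact absurd h (pow_ne_zero _ (mul_ne_zero two_ne_zero hD))
  · exact h

lemma aux23 (c b cb s B3 B4 : ℂ) (hD : B3 - B4 + s ≠ 0)
    (hb : 2*(B3 - B4 + s)*b = s*((B3 - B4 + s) + Complex.I*(B3 + B4 - s)))
    (hcb : 2*(B3 - B4 + s)*cb = s*((B3 - B4 + s) - Complex.I*(B3 + B4 - s)))
    (hs2 : s^2 = B3^2 + B4^2) :
    ((-1)*Complex.I^2*B3^2*c^2 + 1*Complex.I^4*B4^2*c^2 + 1*cb^2*Complex.I^2*c^2 + 2*b*cb*Complex.I^2*c^2 + 1*b^2*Complex.I^2*c^2) = 0 := by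
  have key : (2*(B3 - B4 + s))^2 * (((-1)*Complex.I^2*B3^2*c^2 + 1*Complex.I^4*B4^2*c^2 + 1*cb^2*Complex.I^2*c^2 + 2*b*cb*Complex.I^2*c^2 + 1*b^2*Complex.I^2*c^2)) = 0 := by
    linear_combination ((1*Complex.I^2*(B3 - B4 + s)*s*c^2 + 1*Complex.I^3*s*B4*c^2 + 1*Complex.I^3*s*B3*c^2 + (-1)*Complex.I^3*s^2*c^2 + 4*cb*Complex.I^2*(B3 - B4 + s)*c^2 + 2*b*Complex.I^2*(B3 - B4 + s)*c^2))*hb + ((3*Complex.I^2*(B3 - B4 + s)*s*c^2 + 1*Complex.I^3*s*B4*c^2 + 1*Complex.I^3*s*B3*c^2 + (-1)*Complex.I^3*s^2*c^2 + 2*cb*Complex.I^2*(B3 - B4 + s)*c^2))*hcb + (((-4)*(B3 - B4 + s)^2*B4^2*c^2 + (-4)*(B3 - B4 + s)^2*B3^2*c^2 + 4*(B3 - B4 + s)^2*s^2*c^2 + 4*Complex.I^2*(B3 - B4 + s)^2*B4^2*c^2))*Complex.I_sq + (((-4)*(B3 - B4 + s)^2*c^2))*hs2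
  rcases mul_eq_zero.mp key with h|h
  · exact absurd h (pow_ne_zero _ (mul_ne_zero two_ne_zero hD))
  · exact h

lemma aux24 (h b cb s B3 B4 : ℂ) (hD : B3 - B4 + s ≠ 0)
    (hb : 2*(B3 - B4 + s)*b = s*((B3 - B4 + s) + Complex.I*(B3 + B4 - s)))
    (hcb : 2*(B3 - B4 + s)*cb = s*((B3 - B4 + s) - Complex.I*(B3 + B4 - s)))
    (hs2 : s^2 = B3^2 + B4^2) :
    (1*B3^2*h^2 + (-1)*Complex.I^2*B4^2*h^2 + (-1)*Complex.I^2*B3^2*h^2 + 1*Complex.I^4*B4^2*h^2 + (-2)*cb*Complex.I*B3*h^2 + (-2)*cb*Complex.I^2*B4*h^2 + 2*cb*Complex.I^2*B3*h^2 + 2*cb*Complex.I^3*B4*h^2 + 1*cb^2*h^2 + (-2)*cb^2*Complex.I*h^2 + 1*cb^2*Complex.I^2*h^2 + 2*b*Complex.I*B3*h^2 + (-2)*b*Complex.I^2*B4*h^2 + 2*b*Complex.I^2*B3*h^2 + (-2)*b*Complex.I^3*B4*h^2 + (-2)*b*cb*h^2 + (-2)*b*cb*Complex.I^2*h^2 +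 1*b^2*h^2 + 2*b^2*Complex.I*h^2 + 1*b^2*Complex.I^2*h^2) = 0 := by
  have key : (2*(B3 - B4 + s))^2 * ((1*B3^2*h^2 + (-1)*Complex.I^2*B4^2*h^2 + (-1)*Complex.I^2*B3^2*h^2 + 1*Complex.I^4*B4^2*h^2 + (-2)*cb*Complex.I*B3*h^2 + (-2)*cb*Complex.I^2*B4*h^2 + 2*cb*Complex.I^2*B3*h^2 + 2*cb*Complex.I^3*B4*h^2 + 1*cb^2*h^2 + (-2)*cb^2*Complex.I*h^2 + 1*cb^2*Complex.I^2*h^2 + 2*b*Complex.I*B3*h^2 + (-2)*b*Complex.I^2*B4*h^2 + 2*b*Complex.I^2*B3*h^2 + (-2)*b*Complex.I^3*B4*h^2 + (-2)*b*cb*h^2 + (-2)*b*cb*Complex.I^2*h^2 + 1*b^2*h^2 + 2*b^2*Complex.I*h^2 + 1*b^2*Complex.I^2*h^2)) = 0 := by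
    linear_combination ((1*(B3 - B4 + s)*s*h^2 + 1*Complex.I*s*B4*h^2 + 1*Complex.I*s*B3*h^2 + (-1)*Complex.I*s^2*h^2 + 4*Complex.I*(B3 - B4 + s)*B3*h^2 + 2*Complex.I*(B3 - B4 + s)*s*h^2 + 2*Complex.I^2*s*B4*h^2 + 2*Complex.I^2*s*B3*h^2 + (-2)*Complex.I^2*s^2*h^2 + (-4)*Complex.I^2*(B3 - B4 + s)*B4*h^2 + 4*Complex.I^2*(B3 - B4 + s)*B3*h^2 + 1*Complex.I^2*(B3 - B4 + s)*s*h^2 + 1*Complex.I^3*s*B4*h^2 + 1*Complex.I^3*s*B3*h^2 + (-1)*Complex.I^3*s^2*h^2 + (-4)*Complex.I^3*(B3 - B4 + s)*B4*h^2 + (-4)*cb*(B3 - B4 + s)*h^2 + (-4)*cb*Complex.I^2*(B3 - B4 + s)*h^2 + 2*b*(B3 - B4 + s)*h^2 + 4*b*Complex.I*(B3 - B4 + s)*h^2 + 2*b*Complex.I^2*(B3 - B4 + s)*h^2))*hb + (((-1)*(B3 - B4 + s)*s*h^2 + (-3)*Complex.I*s*B4*h^2 + (-3)*Complex.I*s*B3*h^2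 + 3*Complex.I*s^2*h^2 + (-4)*Complex.I*(B3 - B4 + s)*B3*h^2 + (-2)*Complex.I*(B3 - B4 + s)*s*h^2 + 2*Complex.I^2*s*B4*h^2 + 2*Complex.I^2*s*B3*h^2 + (-2)*Complex.I^2*s^2*h^2 + (-4)*Complex.I^2*(B3 - B4 + s)*B4*h^2 + 4*Complex.I^2*(B3 - B4 + s)*B3*h^2 + (-1)*Complex.I^2*(B3 - B4 + s)*s*h^2 + (-3)*Complex.I^3*s*B4*h^2 + (-3)*Complex.I^3*s*B3*h^2 + 3*Complex.I^3*s^2*h^2 + 4*Complex.I^3*(B3 - B4 + s)*B4*h^2 + 2*cb*(B3 - B4 + s)*h^2 + (-4)*cb*Complex.I*(B3 - B4 + s)*h^2 + 2*cb*Complex.I^2*(B3 - B4 + s)*h^2))*hcb + ((8*(B3 - B4 + s)*s*B4^2*h^2 + 16*(B3 - B4 + s)*s*B3*B4*h^2 + 8*(B3 - B4 + s)*s*B3^2*h^2 + (-8)*(B3 - B4 + s)*s^3*h^2 + (-8)*(B3 - B4 + s)^2*B4^2*h^2 + (-4)*(B3 - B4 + s)^2*B3^2*h^2 + (-8)*(B3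 - B4 + s)^2*s*B4*h^2 + 8*(B3 - B4 + s)^2*s*B3*h^2 + 4*Complex.I^2*s^2*B4^2*h^2 + 8*Complex.I^2*s^2*B3*B4*h^2 + 4*Complex.I^2*s^2*B3^2*h^2 + (-8)*Complex.I^2*s^3*B4*h^2 + (-8)*Complex.I^2*s^3*B3*h^2 + 4*Complex.I^2*s^4*h^2 + (-8)*Complex.I^2*(B3 - B4 + s)*s*B4^2*h^2 + (-8)*Complex.I^2*(B3 - B4 + s)*s*B3*B4*h^2 + 8*Complex.I^2*(B3 - B4 + s)*s^2*B4*h^2 + 4*Complex.I^2*(B3 - B4 + s)^2*B4^2*h^2))*Complex.I_sq + ((8*(B3 - B4 + s)*B4*h^2 + (-8)*(B3 - B4 + s)*B3*h^2 + 8*(B3 - B4 + s)*s*h^2))*hs2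
  rcases mul_eq_zero.mp key with h|h
  · exact absurd h (pow_ne_zero _ (mul_ne_zero two_ne_zero hD))
  · exact h

lemma aux13 (a c : ℂ) : (4*Complex.I^2*a^2*c^2 + 4*Complex.I^4*a^2*c^2) = 0 := by
  linear_combination ((4*Complex.I^2*a^2*c^2))*Complex.I_sq

lemma aux34 (c h : ℂ) : (4*Complex.I^2*c^2*h^2 + 4*Complex.I^4*c^2*h^2) = 0 := by
  linear_combination ((4*Complex.I^2*c^2*h^2))*Complex.I_sq

set_option maxHeartbeats 2000000 in
/-- class III of solutions of the Legendre-transformed hyperbolic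
complex Monge–Ampère equation. -/
theorem stmt5 (A₂ B₃ B₄ C₂ H₂ β₁ β₂ β₃ β₄ β₅ : ℝ)
    (S : ℝ) (hS : S = Real.sqrt (B₃ ^ 2 + B₄ ^ 2))
    (hB : B₃ - B₄ + S ≠ 0)
    (b₁ : ℂ)
    (hb₁ : b₁ = ((S : ℂ) / 2) * (1 + Complex.I * (((B₃ : ℂ) + B₄ - S) / ((B₃ : ℂ) - B₄ + S))))
    (g₁ g₂ g₃ g₄ : ℂ → ℂ)
    (hg₁ : ContDiff ℂ 2 g₁) (hg₂ : ContDiff ℂ 2 g₂)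
    (hg₃ : ContDiff ℂ 2 g₃) (hg₄ : ContDiff ℂ 2 g₄)
    (u : ℂ → ℂ → ℂ → ℂ → ℂ)
    (hu : u = fun p q z w =>
      (β₁ : ℂ)
        + g₁ ((A₂ : ℂ) * (1 + Complex.I) * p + (A₂ : ℂ) * (1 - Complex.I) * q
            + 2 * Complex.I * (A₂ : ℂ) * z - 2 * Complex.I * (A₂ : ℂ) * w + (β₂ : ℂ))
        + g₂ (b₁ * p + (starRingEnd ℂ) b₁ * q + ((B₃ : ℂ) + Complex.I * B₄) * z
            + ((B₃ : ℂ) - Complex.I * B₄) * w + (β₃ : ℂ))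
        + g₃ (Complex.I * (C₂ : ℂ) * p - Complex.I * (C₂ : ℂ) * q + (β₄ : ℂ))
        + g₄ ((H₂ : ℂ) * (-1 + Complex.I) * p + (H₂ : ℂ) * (-1 - Complex.I) * q
            + 2 * Complex.I * (H₂ : ℂ) * z - 2 * Complex.I * (H₂ : ℂ) * w + (β₅ : ℂ))) :
    ∀ p q z w : ℂ,
      pd1 (pd2 u) p q z w * pd3 (pd4 u) p q z w
        - pd1 (pd4 u) p q z w * pd2 (pd3 u) p q z w
        - (pd1 (pd2 u) p q z w) ^ 2
        + pd1 (pd1 u) p q z w * pd2 (pd2 u) p q z w = 0 := by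
  intro p q z w
  have dg1 : Differentiable ℂ g₁ := hg₁.differentiable (by norm_num)
  have dg2 : Differentiable ℂ g₂ := hg₂.differentiable (by norm_num)
  have dg3 : Differentiable ℂ g₃ := hg₃.differentiable (by norm_num)
  have dg4 : Differentiable ℂ g₄ := hg₄.differentiable (by norm_num)
  have h21 : ((1 : WithTop ℕ∞) + 1) = 2 := by norm_num
  have key' : ∀ g : ℂ → ℂ, ContDiff ℂ 2 g → Differentiable ℂ (deriv g) := by
    intro g hg
    have hg' : ContDiff ℂ ((1 : WithTop ℕ∞) + 1) g := by rw [h21]; exact hg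
    exact (contDiff_succ_iff_deriv.mp hg').2.2.differentiable (by norm_num)
  have dg1' : Differentiable ℂ (deriv g₁) := key' g₁ hg₁
  have dg2' : Differentiable ℂ (deriv g₂) := key' g₂ hg₂
  have dg3' : Differentiable ℂ (deriv g₃) := key' g₃ hg₃
  have dg4' : Differentiable ℂ (deriv g₄) := key' g₄ hg₄
  have hDc : ((B₃:ℂ) - (B₄:ℂ) + (S:ℂ)) ≠ 0 := by
    intro h
    apply hB
    have : ((B₃ - B₄ + S : ℝ) : ℂ) = 0 := by push_cast; exact h
    exact_mod_cast this
  have hS2c : ((S:ℂ))^2 = (B₃:ℂ)^2 + (B₄:ℂ)^2 := by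
    have hnn : (0:ℝ) ≤ B₃^2 + B₄^2 := by positivity
    have : S^2 = B₃^2 + B₄^2 := by rw [hS, Real.sq_sqrt hnn]
    exact_mod_cast this
  have hb' : 2*((B₃:ℂ) - (B₄:ℂ) + (S:ℂ))*b₁
      = (S:ℂ)*(((B₃:ℂ) - (B₄:ℂ) + (S:ℂ)) + Complex.I*((B₃:ℂ) + (B₄:ℂ) - (S:ℂ))) := by
    rw [hb₁]; field_simp; try ring
  have hcb' : 2*((B₃:ℂ) - (B₄:ℂ) + (S:ℂ))*((starRingEnd ℂ) b₁)
      = (S:ℂ)*(((B₃:ℂ) - (B₄:ℂ) + (S:ℂ)) - Complex.I*((B₃:ℂ) + (B₄:ℂ) - (S:ℂ))) := by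
    have h := congrArg (starRingEnd ℂ) hb'
    simp only [map_mul, map_add, map_sub, map_one, map_ofNat, Complex.conj_ofReal,
      Complex.conj_I] at h
    linear_combination h
  have Hp : ∀ a b c d : ℂ, pd1 u a b c d =
      (A₂:ℂ)*(1+Complex.I) * deriv g₁ ((A₂:ℂ)*(1+Complex.I) * a + (A₂:ℂ)*(1-Complex.I) * b + 2*Complex.I*(A₂:ℂ) * c + (-(2*Complex.I*(A₂:ℂ))) * d + (β₂:ℂ)) + b₁ * deriv g₂ (b₁ * a + (starRingEnd ℂ) b₁ * b + ((B₃:ℂ)+Complex.I*(B₄:ℂ)) * c + ((B₃:ℂ)-Complex.I*(B₄:ℂ)) * d + (β₃:ℂ)) + Complex.I*(C₂:ℂ) * deriv g₃ (Complex.I*(C₂:ℂ) * a + (-(Complex.I*(C₂:ℂ))) * b + 0 * c + 0 * d + (β₄:ℂ)) + (H₂:ℂ)*(-1+Complex.I) * deriv g₄ ((H₂:ℂ)*(-1+Complex.I) * a + (H₂:ℂ)*(-1-Complex.I) * b + 2*Complex.I*(H₂:ℂ) * c + (-(2*Complex.I*(H₂:ℂ))) * d + (β₅:ℂ)) := by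
    intro a b c d
    have hfun : (fun s => u s b c d) = (fun s => (β₁:ℂ) + 1 * g₁ ((A₂:ℂ)*(1+Complex.I) * s + ((A₂:ℂ)*(1-Complex.I) * b + 2*Complex.I*(A₂:ℂ) * c + (-(2*Complex.I*(A₂:ℂ))) * d + (β₂:ℂ))) + 1 * g₂ (b₁ * s + ((starRingEnd ℂ) b₁ * b + ((B₃:ℂ)+Complex.I*(B₄:ℂ)) * c + ((B₃:ℂ)-Complex.I*(B₄:ℂ)) * d + (β₃:ℂ))) + 1 * g₃ (Complex.I*(C₂:ℂ) * s + ((-(Complex.I*(C₂:ℂ))) * b + 0 * c + 0 * d + (β₄:ℂ))) + 1 * g₄ ((H₂:ℂ)*(-1+Complex.I) * s + ((H₂:ℂ)*(-1-Complex.I) * b + 2*Complex.I*(H₂:ℂ) * c + (-(2*Complex.I*(H₂:ℂ))) * d + (β₅:ℂ)))) := by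
      funext s; rw [hu]; ring_nf
    simp only [pd1]
    rw [hfun, derivSum g₁ g₂ g₃ g₄ dg1 dg2 dg3 dg4]
    ring_nf
  have Hq : ∀ a b c d : ℂ, pd2 u a b c d =
      (A₂:ℂ)*(1-Complex.I) * deriv g₁ ((A₂:ℂ)*(1+Complex.I) * a + (A₂:ℂ)*(1-Complex.I) * b + 2*Complex.I*(A₂:ℂ) * c + (-(2*Complex.I*(A₂:ℂ))) * d + (β₂:ℂ)) + (starRingEnd ℂ) b₁ * deriv g₂ (b₁ * a + (starRingEnd ℂ) b₁ * b + ((B₃:ℂ)+Complex.I*(B₄:ℂ)) * c + ((B₃:ℂ)-Complex.I*(B₄:ℂ)) * d + (β₃:ℂ)) + (-(Complex.I*(C₂:ℂ))) * deriv g₃ (Complex.I*(C₂:ℂ) * a + (-(Complex.I*(C₂:ℂ))) * b + 0 * c + 0 * d + (β₄:ℂ)) + (H₂:ℂ)*(-1-Complex.I) * deriv g₄ ((H₂:ℂ)*(-1+Complex.I) * a + (H₂:ℂ)*(-1-Complex.I) * b + 2*Complex.I*(H₂:ℂ) * c + (-(2*Complex.I*(H₂:ℂ))) * d + (β₅:ℂ))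 := by
    intro a b c d
    have hfun : (fun s => u a s c d) = (fun s => (β₁:ℂ) + 1 * g₁ ((A₂:ℂ)*(1-Complex.I) * s + ((A₂:ℂ)*(1+Complex.I) * a + 2*Complex.I*(A₂:ℂ) * c + (-(2*Complex.I*(A₂:ℂ))) * d + (β₂:ℂ))) + 1 * g₂ ((starRingEnd ℂ) b₁ * s + (b₁ * a + ((B₃:ℂ)+Complex.I*(B₄:ℂ)) * c + ((B₃:ℂ)-Complex.I*(B₄:ℂ)) * d + (β₃:ℂ))) + 1 * g₃ ((-(Complex.I*(C₂:ℂ))) * s + (Complex.I*(C₂:ℂ) * a + 0 * c + 0 * d + (β₄:ℂ))) + 1 * g₄ ((H₂:ℂ)*(-1-Complex.I) * s + ((H₂:ℂ)*(-1+Complex.I) * a + 2*Complex.I*(H₂:ℂ) * c + (-(2*Complex.I*(H₂:ℂ))) * d + (β₅:ℂ)))) := by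
      funext s; rw [hu]; ring_nf
    simp only [pd2]
    rw [hfun, derivSum g₁ g₂ g₃ g₄ dg1 dg2 dg3 dg4]
    ring_nf
  have Hz : ∀ a b c d : ℂ, pd3 u a b c d =
      2*Complex.I*(A₂:ℂ) * deriv g₁ ((A₂:ℂ)*(1+Complex.I) * a + (A₂:ℂ)*(1-Complex.I) * b + 2*Complex.I*(A₂:ℂ) * c + (-(2*Complex.I*(A₂:ℂ))) * d + (β₂:ℂ)) + ((B₃:ℂ)+Complex.I*(B₄:ℂ)) * deriv g₂ (b₁ * a + (starRingEnd ℂ) b₁ * b + ((B₃:ℂ)+Complex.I*(B₄:ℂ)) * c + ((B₃:ℂ)-Complex.I*(B₄:ℂ)) * d + (β₃:ℂ)) + 0 * deriv g₃ (Complex.I*(C₂:ℂ) * a + (-(Complex.I*(C₂:ℂ))) * b + 0 * c + 0 * d + (β₄:ℂ)) + 2*Complex.I*(H₂:ℂ) * deriv g₄ ((H₂:ℂ)*(-1+Complex.I) * a + (H₂:ℂ)*(-1-Complex.I) * b + 2*Complex.I*(H₂:ℂ) * c + (-(2*Complex.I*(H₂:ℂ))) * d + (β₅:ℂ)) := by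
    intro a b c d
    have hfun : (fun s => u a b s d) = (fun s => (β₁:ℂ) + 1 * g₁ (2*Complex.I*(A₂:ℂ) * s + ((A₂:ℂ)*(1+Complex.I) * a + (A₂:ℂ)*(1-Complex.I) * b + (-(2*Complex.I*(A₂:ℂ))) * d + (β₂:ℂ))) + 1 * g₂ (((B₃:ℂ)+Complex.I*(B₄:ℂ)) * s + (b₁ * a + (starRingEnd ℂ) b₁ * b + ((B₃:ℂ)-Complex.I*(B₄:ℂ)) * d + (β₃:ℂ))) + 1 * g₃ (0 * s + (Complex.I*(C₂:ℂ) * a + (-(Complex.I*(C₂:ℂ))) * b + 0 * d + (β₄:ℂ))) + 1 * g₄ (2*Complex.I*(H₂:ℂ) * s + ((H₂:ℂ)*(-1+Complex.I) * a + (H₂:ℂ)*(-1-Complex.I) * b + (-(2*Complex.I*(H₂:ℂ))) * d + (β₅:ℂ)))) := by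
      funext s; rw [hu]; ring_nf
    simp only [pd3]
    rw [hfun, derivSum g₁ g₂ g₃ g₄ dg1 dg2 dg3 dg4]
    ring_nf
  have Hw : ∀ a b c d : ℂ, pd4 u a b c d =
      (-(2*Complex.I*(A₂:ℂ))) * deriv g₁ ((A₂:ℂ)*(1+Complex.I) * a + (A₂:ℂ)*(1-Complex.I) * b + 2*Complex.I*(A₂:ℂ) * c + (-(2*Complex.I*(A₂:ℂ))) * d + (β₂:ℂ)) + ((B₃:ℂ)-Complex.I*(B₄:ℂ)) * deriv g₂ (b₁ * a + (starRingEnd ℂ) b₁ * b + ((B₃:ℂ)+Complex.I*(B₄:ℂ)) * c + ((B₃:ℂ)-Complex.I*(B₄:ℂ)) * d + (β₃:ℂ)) + 0 * deriv g₃ (Complex.I*(C₂:ℂ) * a + (-(Complex.I*(C₂:ℂ))) * b + 0 * c + 0 * d + (β₄:ℂ)) + (-(2*Complex.I*(H₂:ℂ))) * deriv g₄ ((H₂:ℂ)*(-1+Complex.I) * a + (H₂:ℂ)*(-1-Complex.I) * b + 2*Complex.I*(H₂:ℂ) * c + (-(2*Complex.I*(H₂:ℂ))) * d + (β₅:ℂ))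 := by
    intro a b c d
    have hfun : (fun s => u a b c s) = (fun s => (β₁:ℂ) + 1 * g₁ ((-(2*Complex.I*(A₂:ℂ))) * s + ((A₂:ℂ)*(1+Complex.I) * a + (A₂:ℂ)*(1-Complex.I) * b + 2*Complex.I*(A₂:ℂ) * c + (β₂:ℂ))) + 1 * g₂ (((B₃:ℂ)-Complex.I*(B₄:ℂ)) * s + (b₁ * a + (starRingEnd ℂ) b₁ * b + ((B₃:ℂ)+Complex.I*(B₄:ℂ)) * c + (β₃:ℂ))) + 1 * g₃ (0 * s + (Complex.I*(C₂:ℂ) * a + (-(Complex.I*(C₂:ℂ))) * b + 0 * c + (β₄:ℂ))) + 1 * g₄ ((-(2*Complex.I*(H₂:ℂ))) * s + ((H₂:ℂ)*(-1+Complex.I) * a + (H₂:ℂ)*(-1-Complex.I) * b + 2*Complex.I*(H₂:ℂ) * c + (β₅:ℂ)))) := by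
      funext s; rw [hu]; ring_nf
    simp only [pd4]
    rw [hfun, derivSum g₁ g₂ g₃ g₄ dg1 dg2 dg3 dg4]
    ring_nf
  have Hpq : pd1 (pd2 u) p q z w =
      (A₂:ℂ)*(1+Complex.I) * (A₂:ℂ)*(1-Complex.I) * deriv (deriv g₁) ((A₂:ℂ)*(1+Complex.I) * p + (A₂:ℂ)*(1-Complex.I) * q + 2*Complex.I*(A₂:ℂ) * z + (-(2*Complex.I*(A₂:ℂ))) * w + (β₂:ℂ)) + b₁ * (starRingEnd ℂ) b₁ * deriv (deriv g₂) (b₁ * p + (starRingEnd ℂ) b₁ * q + ((B₃:ℂ)+Complex.I*(B₄:ℂ)) * z + ((B₃:ℂ)-Complex.I*(B₄:ℂ)) * w + (β₃:ℂ)) + Complex.I*(C₂:ℂ) * (-(Complex.I*(C₂:ℂ))) * deriv (deriv g₃) (Complex.I*(C₂:ℂ) * p + (-(Complex.I*(C₂:ℂ))) * q + 0 * z + 0 * w + (β₄:ℂ)) + (H₂:ℂ)*(-1+Complex.I) * (H₂:ℂ)*(-1-Complex.I) * deriv (deriv g₄) ((H₂:ℂ)*(-1+Complex.I) * p + (H₂:ℂ)*(-1-Complex.I)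 * q + 2*Complex.I*(H₂:ℂ) * z + (-(2*Complex.I*(H₂:ℂ))) * w + (β₅:ℂ)) := by
    have hfun : (fun s => pd2 u s q z w) = (fun s => (0:ℂ) + (A₂:ℂ)*(1-Complex.I) * deriv g₁ ((A₂:ℂ)*(1+Complex.I) * s + ((A₂:ℂ)*(1-Complex.I) * q + 2*Complex.I*(A₂:ℂ) * z + (-(2*Complex.I*(A₂:ℂ))) * w + (β₂:ℂ))) + (starRingEnd ℂ) b₁ * deriv g₂ (b₁ * s + ((starRingEnd ℂ) b₁ * q + ((B₃:ℂ)+Complex.I*(B₄:ℂ)) * z + ((B₃:ℂ)-Complex.I*(B₄:ℂ)) * w + (β₃:ℂ))) + (-(Complex.I*(C₂:ℂ))) * deriv g₃ (Complex.I*(C₂:ℂ) * s + ((-(Complex.I*(C₂:ℂ))) * q + 0 * z + 0 * w + (β₄:ℂ))) + (H₂:ℂ)*(-1-Complex.I) * deriv g₄ ((H₂:ℂ)*(-1+Complex.I) * s + ((H₂:ℂ)*(-1-Complex.I) * q + 2*Complex.I*(H₂:ℂ) * z + (-(2*Complex.I*(H₂:ℂ))) * w + (β₅:ℂ)))) :=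 by
      funext s; rw [Hq]; ring_nf
    show deriv (fun s => pd2 u s q z w) p = _
    rw [hfun, derivSum (deriv g₁) (deriv g₂) (deriv g₃) (deriv g₄) dg1' dg2' dg3' dg4']
    ring_nf
  have Hzw : pd3 (pd4 u) p q z w =
      2*Complex.I*(A₂:ℂ) * (-(2*Complex.I*(A₂:ℂ))) * deriv (deriv g₁) ((A₂:ℂ)*(1+Complex.I) * p + (A₂:ℂ)*(1-Complex.I) * q + 2*Complex.I*(A₂:ℂ) * z + (-(2*Complex.I*(A₂:ℂ))) * w + (β₂:ℂ)) + ((B₃:ℂ)+Complex.I*(B₄:ℂ)) * ((B₃:ℂ)-Complex.I*(B₄:ℂ)) * deriv (deriv g₂) (b₁ * p + (starRingEnd ℂ) b₁ * q + ((B₃:ℂ)+Complex.I*(B₄:ℂ)) * z + ((B₃:ℂ)-Complex.I*(B₄:ℂ)) * w + (β₃:ℂ)) + 0 * 0 * deriv (deriv g₃) (Complex.I*(C₂:ℂ) * p + (-(Complex.I*(C₂:ℂ))) * q + 0 * z + 0 * w + (β₄:ℂ)) + 2*Complex.I*(H₂:ℂ) * (-(2*Complex.I*(H₂:ℂ)))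 * deriv (deriv g₄) ((H₂:ℂ)*(-1+Complex.I) * p + (H₂:ℂ)*(-1-Complex.I) * q + 2*Complex.I*(H₂:ℂ) * z + (-(2*Complex.I*(H₂:ℂ))) * w + (β₅:ℂ)) := by
    have hfun : (fun s => pd4 u p q s w) = (fun s => (0:ℂ) + (-(2*Complex.I*(A₂:ℂ))) * deriv g₁ (2*Complex.I*(A₂:ℂ) * s + ((A₂:ℂ)*(1+Complex.I) * p + (A₂:ℂ)*(1-Complex.I) * q + (-(2*Complex.I*(A₂:ℂ))) * w + (β₂:ℂ))) + ((B₃:ℂ)-Complex.I*(B₄:ℂ)) * deriv g₂ (((B₃:ℂ)+Complex.I*(B₄:ℂ)) * s + (b₁ * p + (starRingEnd ℂ) b₁ * q + ((B₃:ℂ)-Complex.I*(B₄:ℂ)) * w + (β₃:ℂ))) + 0 * deriv g₃ (0 * s + (Complex.I*(C₂:ℂ) * p + (-(Complex.I*(C₂:ℂ))) * q + 0 * w + (β₄:ℂ))) + (-(2*Complex.I*(H₂:ℂ))) * deriv g₄ (2*Complex.I*(H₂:ℂ) * s + ((H₂:ℂ)*(-1+Complex.I) * p + (H₂:ℂ)*(-1-Complex.I)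 * q + (-(2*Complex.I*(H₂:ℂ))) * w + (β₅:ℂ)))) := by
      funext s; rw [Hw]; ring_nf
    show deriv (fun s => pd4 u p q s w) z = _
    rw [hfun, derivSum (deriv g₁) (deriv g₂) (deriv g₃) (deriv g₄) dg1' dg2' dg3' dg4']
    ring_nf
  have Hpw : pd1 (pd4 u) p q z w =
      (A₂:ℂ)*(1+Complex.I) * (-(2*Complex.I*(A₂:ℂ))) * deriv (deriv g₁) ((A₂:ℂ)*(1+Complex.I) * p + (A₂:ℂ)*(1-Complex.I) * q + 2*Complex.I*(A₂:ℂ) * z + (-(2*Complex.I*(A₂:ℂ))) * w + (β₂:ℂ)) + b₁ * ((B₃:ℂ)-Complex.I*(B₄:ℂ)) * deriv (deriv g₂) (b₁ * p + (starRingEnd ℂ) b₁ * q + ((B₃:ℂ)+Complex.I*(B₄:ℂ)) * z + ((B₃:ℂ)-Complex.I*(B₄:ℂ)) * w + (β₃:ℂ)) + Complex.I*(C₂:ℂ) * 0 * deriv (deriv g₃) (Complex.I*(C₂:ℂ) * p + (-(Complex.I*(C₂:ℂ))) * q + 0 * z + 0 * w + (β₄:ℂ)) + (H₂:ℂ)*(-1+Complex.I)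 * (-(2*Complex.I*(H₂:ℂ))) * deriv (deriv g₄) ((H₂:ℂ)*(-1+Complex.I) * p + (H₂:ℂ)*(-1-Complex.I) * q + 2*Complex.I*(H₂:ℂ) * z + (-(2*Complex.I*(H₂:ℂ))) * w + (β₅:ℂ)) := by
    have hfun : (fun s => pd4 u s q z w) = (fun s => (0:ℂ) + (-(2*Complex.I*(A₂:ℂ))) * deriv g₁ ((A₂:ℂ)*(1+Complex.I) * s + ((A₂:ℂ)*(1-Complex.I) * q + 2*Complex.I*(A₂:ℂ) * z + (-(2*Complex.I*(A₂:ℂ))) * w + (β₂:ℂ))) + ((B₃:ℂ)-Complex.I*(B₄:ℂ)) * deriv g₂ (b₁ * s + ((starRingEnd ℂ) b₁ * q + ((B₃:ℂ)+Complex.I*(B₄:ℂ)) * z + ((B₃:ℂ)-Complex.I*(B₄:ℂ)) * w + (β₃:ℂ))) + 0 * deriv g₃ (Complex.I*(C₂:ℂ) * s + ((-(Complex.I*(C₂:ℂ))) * q + 0 * z + 0 * w + (β₄:ℂ))) + (-(2*Complex.I*(H₂:ℂ))) * deriv g₄ ((H₂:ℂ)*(-1+Complex.I) * s + ((H₂:ℂ)*(-1-Complex.I)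 * q + 2*Complex.I*(H₂:ℂ) * z + (-(2*Complex.I*(H₂:ℂ))) * w + (β₅:ℂ)))) := by
      funext s; rw [Hw]; ring_nf
    show deriv (fun s => pd4 u s q z w) p = _
    rw [hfun, derivSum (deriv g₁) (deriv g₂) (deriv g₃) (deriv g₄) dg1' dg2' dg3' dg4']
    ring_nf
  have Hqz : pd2 (pd3 u) p q z w =
      (A₂:ℂ)*(1-Complex.I) * 2*Complex.I*(A₂:ℂ) * deriv (deriv g₁) ((A₂:ℂ)*(1+Complex.I) * p + (A₂:ℂ)*(1-Complex.I) * q + 2*Complex.I*(A₂:ℂ) * z + (-(2*Complex.I*(A₂:ℂ))) * w + (β₂:ℂ)) + (starRingEnd ℂ) b₁ * ((B₃:ℂ)+Complex.I*(B₄:ℂ)) * deriv (deriv g₂) (b₁ * p + (starRingEnd ℂ) b₁ * q + ((B₃:ℂ)+Complex.I*(B₄:ℂ)) * z + ((B₃:ℂ)-Complex.I*(B₄:ℂ)) * w + (β₃:ℂ)) + (-(Complex.I*(C₂:ℂ))) * 0 * deriv (deriv g₃) (Complex.I*(C₂:ℂ) * p + (-(Complex.I*(C₂:ℂ))) * q +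 0 * z + 0 * w + (β₄:ℂ)) + (H₂:ℂ)*(-1-Complex.I) * 2*Complex.I*(H₂:ℂ) * deriv (deriv g₄) ((H₂:ℂ)*(-1+Complex.I) * p + (H₂:ℂ)*(-1-Complex.I) * q + 2*Complex.I*(H₂:ℂ) * z + (-(2*Complex.I*(H₂:ℂ))) * w + (β₅:ℂ)) := by
    have hfun : (fun s => pd3 u p s z w) = (fun s => (0:ℂ) + 2*Complex.I*(A₂:ℂ) * deriv g₁ ((A₂:ℂ)*(1-Complex.I) * s + ((A₂:ℂ)*(1+Complex.I) * p + 2*Complex.I*(A₂:ℂ) * z + (-(2*Complex.I*(A₂:ℂ))) * w + (β₂:ℂ))) + ((B₃:ℂ)+Complex.I*(B₄:ℂ)) * deriv g₂ ((starRingEnd ℂ) b₁ * s + (b₁ * p + ((B₃:ℂ)+Complex.I*(B₄:ℂ)) * z + ((B₃:ℂ)-Complex.I*(B₄:ℂ)) * w + (β₃:ℂ))) + 0 * deriv g₃ ((-(Complex.I*(C₂:ℂ))) * s + (Complex.I*(C₂:ℂ) * p + 0 * z + 0 * w + (β₄:ℂ))) + 2*Complex.I*(H₂:ℂ) * deriv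 g₄ ((H₂:ℂ)*(-1-Complex.I) * s + ((H₂:ℂ)*(-1+Complex.I) * p + 2*Complex.I*(H₂:ℂ) * z + (-(2*Complex.I*(H₂:ℂ))) * w + (β₅:ℂ)))) := by
      funext s; rw [Hz]; ring_nf
    show deriv (fun s => pd3 u p s z w) q = _
    rw [hfun, derivSum (deriv g₁) (deriv g₂) (deriv g₃) (deriv g₄) dg1' dg2' dg3' dg4']
    ring_nf
  have Hpp : pd1 (pd1 u) p q z w =
      (A₂:ℂ)*(1+Complex.I) * (A₂:ℂ)*(1+Complex.I) * deriv (deriv g₁) ((A₂:ℂ)*(1+Complex.I) * p + (A₂:ℂ)*(1-Complex.I) * q + 2*Complex.I*(A₂:ℂ) * z + (-(2*Complex.I*(A₂:ℂ))) * w + (β₂:ℂ)) + b₁ * b₁ * deriv (deriv g₂) (b₁ * p + (starRingEnd ℂ) b₁ * q + ((B₃:ℂ)+Complex.I*(B₄:ℂ)) * z + ((B₃:ℂ)-Complex.I*(B₄:ℂ)) * w + (β₃:ℂ)) + Complex.I*(C₂:ℂ) * Complex.I*(C₂:ℂ) * deriv (deriv g₃) (Complex.I*(C₂:ℂ) * p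 + (-(Complex.I*(C₂:ℂ))) * q + 0 * z + 0 * w + (β₄:ℂ)) + (H₂:ℂ)*(-1+Complex.I) * (H₂:ℂ)*(-1+Complex.I) * deriv (deriv g₄) ((H₂:ℂ)*(-1+Complex.I) * p + (H₂:ℂ)*(-1-Complex.I) * q + 2*Complex.I*(H₂:ℂ) * z + (-(2*Complex.I*(H₂:ℂ))) * w + (β₅:ℂ)) := by
    have hfun : (fun s => pd1 u s q z w) = (fun s => (0:ℂ) + (A₂:ℂ)*(1+Complex.I) * deriv g₁ ((A₂:ℂ)*(1+Complex.I) * s + ((A₂:ℂ)*(1-Complex.I) * q + 2*Complex.I*(A₂:ℂ) * z + (-(2*Complex.I*(A₂:ℂ))) * w + (β₂:ℂ))) + b₁ * deriv g₂ (b₁ * s + ((starRingEnd ℂ) b₁ * q + ((B₃:ℂ)+Complex.I*(B₄:ℂ)) * z + ((B₃:ℂ)-Complex.I*(B₄:ℂ)) * w + (β₃:ℂ))) + Complex.I*(C₂:ℂ) * deriv g₃ (Complex.I*(C₂:ℂ) * s + ((-(Complex.I*(C₂:ℂ))) * q + 0 * z + 0 * w + (β₄:ℂ))) + (H₂:ℂ)*(-1+Complex.I)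 * deriv g₄ ((H₂:ℂ)*(-1+Complex.I) * s + ((H₂:ℂ)*(-1-Complex.I) * q + 2*Complex.I*(H₂:ℂ) * z + (-(2*Complex.I*(H₂:ℂ))) * w + (β₅:ℂ)))) := by
      funext s; rw [Hp]; ring_nf
    show deriv (fun s => pd1 u s q z w) p = _
    rw [hfun, derivSum (deriv g₁) (deriv g₂) (deriv g₃) (deriv g₄) dg1' dg2' dg3' dg4']
    ring_nf
  have Hqq : pd2 (pd2 u) p q z w =
      (A₂:ℂ)*(1-Complex.I) * (A₂:ℂ)*(1-Complex.I) * deriv (deriv g₁) ((A₂:ℂ)*(1+Complex.I) * p + (A₂:ℂ)*(1-Complex.I) * q + 2*Complex.I*(A₂:ℂ) * z + (-(2*Complex.I*(A₂:ℂ))) * w + (β₂:ℂ)) + (starRingEnd ℂ) b₁ * (starRingEnd ℂ) b₁ * deriv (deriv g₂) (b₁ * p + (starRingEnd ℂ) b₁ * q + ((B₃:ℂ)+Complex.I*(B₄:ℂ)) * z + ((B₃:ℂ)-Complex.I*(B₄:ℂ)) * w + (β₃:ℂ)) + (-(Complex.I*(C₂:ℂ))) * (-(Complex.I*(C₂:ℂ)))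 * deriv (deriv g₃) (Complex.I*(C₂:ℂ) * p + (-(Complex.I*(C₂:ℂ))) * q + 0 * z + 0 * w + (β₄:ℂ)) + (H₂:ℂ)*(-1-Complex.I) * (H₂:ℂ)*(-1-Complex.I) * deriv (deriv g₄) ((H₂:ℂ)*(-1+Complex.I) * p + (H₂:ℂ)*(-1-Complex.I) * q + 2*Complex.I*(H₂:ℂ) * z + (-(2*Complex.I*(H₂:ℂ))) * w + (β₅:ℂ)) := by
    have hfun : (fun s => pd2 u p s z w) = (fun s => (0:ℂ) + (A₂:ℂ)*(1-Complex.I) * deriv g₁ ((A₂:ℂ)*(1-Complex.I) * s + ((A₂:ℂ)*(1+Complex.I) * p + 2*Complex.I*(A₂:ℂ) * z + (-(2*Complex.I*(A₂:ℂ))) * w + (β₂:ℂ))) + (starRingEnd ℂ) b₁ * deriv g₂ ((starRingEnd ℂ) b₁ * s + (b₁ * p + ((B₃:ℂ)+Complex.I*(B₄:ℂ)) * z + ((B₃:ℂ)-Complex.I*(B₄:ℂ)) * w + (β₃:ℂ))) + (-(Complex.I*(C₂:ℂ))) * deriv g₃ ((-(Complex.I*(C₂:ℂ))) * s + (Complex.I*(C₂:ℂ)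 * p + 0 * z + 0 * w + (β₄:ℂ))) + (H₂:ℂ)*(-1-Complex.I) * deriv g₄ ((H₂:ℂ)*(-1-Complex.I) * s + ((H₂:ℂ)*(-1+Complex.I) * p + 2*Complex.I*(H₂:ℂ) * z + (-(2*Complex.I*(H₂:ℂ))) * w + (β₅:ℂ)))) := by
      funext s; rw [Hq]; ring_nf
    show deriv (fun s => pd2 u p s z w) q = _
    rw [hfun, derivSum (deriv g₁) (deriv g₂) (deriv g₃) (deriv g₄) dg1' dg2' dg3' dg4']
    ring_nf
  rw [Hpq, Hzw, Hpw, Hqz, Hpp, Hqq]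
  have h12 := aux12 (A₂:ℂ) b₁ ((starRingEnd ℂ) b₁) (S:ℂ) (B₃:ℂ) (B₄:ℂ) hDc hb' hcb' hS2c
  have h23 := aux23 (C₂:ℂ) b₁ ((starRingEnd ℂ) b₁) (S:ℂ) (B₃:ℂ) (B₄:ℂ) hDc hb' hcb' hS2c
  have h24 := aux24 (H₂:ℂ) b₁ ((starRingEnd ℂ) b₁) (S:ℂ) (B₃:ℂ) (B₄:ℂ) hDc hb' hcb' hS2c
  have h13 := aux13 (A₂:ℂ) (C₂:ℂ)
  have h34 := aux34 (C₂:ℂ) (H₂:ℂ)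
  linear_combination ((deriv (deriv g₁) ((A₂:ℂ)*(1+Complex.I) * p + (A₂:ℂ)*(1-Complex.I) * q + 2*Complex.I*(A₂:ℂ) * z + (-(2*Complex.I*(A₂:ℂ))) * w + (β₂:ℂ)))*(deriv (deriv g₂) (b₁ * p + (starRingEnd ℂ) b₁ * q + ((B₃:ℂ)+Complex.I*(B₄:ℂ)) * z + ((B₃:ℂ)-Complex.I*(B₄:ℂ)) * w + (β₃:ℂ))))*h12 + ((deriv (deriv g₁) ((A₂:ℂ)*(1+Complex.I) * p + (A₂:ℂ)*(1-Complex.I) * q + 2*Complex.I*(A₂:ℂ) * z + (-(2*Complex.I*(A₂:ℂ))) * w + (β₂:ℂ)))*(deriv (deriv g₃) (Complex.I*(C₂:ℂ) * p + (-(Complex.I*(C₂:ℂ))) * q + 0 * z + 0 * w + (β₄:ℂ))))*h13 + ((deriv (deriv g₂) (b₁ * p + (starRingEnd ℂ) b₁ * q + ((B₃:ℂ)+Complex.I*(B₄:ℂ)) * z + ((B₃:ℂ)-Complex.I*(B₄:ℂ)) * w + (β₃:ℂ)))*(deriv (deriv g₃) (Complex.I*(C₂:ℂ) * p + (-(Complex.I*(C₂:ℂ)))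 * q + 0 * z + 0 * w + (β₄:ℂ))))*h23 + ((deriv (deriv g₂) (b₁ * p + (starRingEnd ℂ) b₁ * q + ((B₃:ℂ)+Complex.I*(B₄:ℂ)) * z + ((B₃:ℂ)-Complex.I*(B₄:ℂ)) * w + (β₃:ℂ)))*(deriv (deriv g₄) ((H₂:ℂ)*(-1+Complex.I) * p + (H₂:ℂ)*(-1-Complex.I) * q + 2*Complex.I*(H₂:ℂ) * z + (-(2*Complex.I*(H₂:ℂ))) * w + (β₅:ℂ))))*h24 + ((deriv (deriv g₃) (Complex.I*(C₂:ℂ) * p + (-(Complex.I*(C₂:ℂ))) * q + 0 * z + 0 * w + (β₄:ℂ)))*(deriv (deriv g₄) ((H₂:ℂ)*(-1+Complex.I) * p + (H₂:ℂ)*(-1-Complex.I) * q + 2*Complex.I*(H₂:ℂ) * z + (-(2*Complex.I*(H₂:ℂ))) * w + (β₅:ℂ))))*h34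
end

section
/- Let A, a₂, d₁, d₂, d₄ be elements of ℂ with d₁d₂ ≠ 0, set a₃ = −a₂(d₁d₂−d₂²−d₁d₄)/(d₁d₂), c₃ = −iA(d₁d₂+d₂²+d₁d₄)/(d₁d₂), d₃ = −(d₁²−d₂²−d₁d₄)/d₂, and let G₁, G₂, G₃, G₄ ∈ ℂ (values of first derivatives of functions g₁,…,g₄). Let M be the 4×4 matrix with rows (a₂G₁, a₂G₁, a₃G₁, a₃G₁), (d₂G₂, d₁G₂, d₄G₂, d₃G₂), (−iA·G₃, iA·G₃, c₃G₃, −c₃G₃), (d₁G₄, d₂G₄, d₃G₄, d₄G₄). Then det M = (2i·a₂·A/(d₁²d₂²))·(d₁⁶ − d₂⁶ − 3d₁⁴d₂² + 3d₁²d₂⁴)·G₁G₂G₃G₄. -/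
set_option maxHeartbeats 1000000 in
lemma my_det_fin_four {R : Type*} [CommRing R] (M : Matrix (Fin 4) (Fin 4) R) :
    M.det =
      M 0 0 * (M 1 1 * (M 2 2 * M 3 3 - M 2 3 * M 3 2)
             - M 1 2 * (M 2 1 * M 3 3 - M 2 3 * M 3 1)
             + M 1 3 * (M 2 1 * M 3 2 - M 2 2 * M 3 1))
    - M 0 1 * (M 1 0 * (M 2 2 * M 3 3 - M 2 3 * M 3 2)
             - M 1 2 * (M 2 0 * M 3 3 - M 2 3 * M 3 0)
             + M 1 3 * (M 2 0 * M 3 2 - M 2 2 * M 3 0))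
    + M 0 2 * (M 1 0 * (M 2 1 * M 3 3 - M 2 3 * M 3 1)
             - M 1 1 * (M 2 0 * M 3 3 - M 2 3 * M 3 0)
             + M 1 3 * (M 2 0 * M 3 1 - M 2 1 * M 3 0))
    - M 0 3 * (M 1 0 * (M 2 1 * M 3 2 - M 2 2 * M 3 1)
             - M 1 1 * (M 2 0 * M 3 2 - M 2 2 * M 3 0)
             + M 1 2 * (M 2 0 * M 3 1 - M 2 1 * M 3 0)) := by
  simp [Matrix.det_succ_row_zero, Fin.sum_univ_succ, Fin.succAbove,
    show (Fin.succ 2 : Fin 4) = 3 from rfl, show (Fin.castSucc 2 : Fin 4) = 2 from rfl,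
    show ((1:Fin 4) < 3) = True from by decide]
  ring

set_option maxHeartbeats 4000000 in
open Matrix in
/-- determinant of the Jacobian matrix of the class I ansatz for
the Legendre-transformed hyperbolic complex Monge–Ampère equation. -/
theorem stmt7 (A a₂ d₁ d₂ d₄ : ℂ) (hd : d₁ * d₂ ≠ 0)
    (a₃ c₃ d₃ : ℂ)
    (ha₃ : a₃ = -a₂ * (d₁ * d₂ - d₂ ^ 2 - d₁ * d₄) / (d₁ * d₂))
    (hc₃ : c₃ = -Complex.I * A * (d₁ * d₂ + d₂ ^ 2 + d₁ * d₄) / (d₁ * d₂))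
    (hd₃ : d₃ = -(d₁ ^ 2 - d₂ ^ 2 - d₁ * d₄) / d₂)
    (G₁ G₂ G₃ G₄ : ℂ)
    (M : Matrix (Fin 4) (Fin 4) ℂ)
    (hM : M = !![a₂ * G₁, a₂ * G₁, a₃ * G₁, a₃ * G₁;
                 d₂ * G₂, d₁ * G₂, d₄ * G₂, d₃ * G₂;
                 -Complex.I * A * G₃, Complex.I * A * G₃, c₃ * G₃, -c₃ * G₃;
                 d₁ * G₄, d₂ * G₄, d₃ * G₄, d₄ * G₄]) :
    M.det = (2 * Complex.I * a₂ * A / (d₁ ^ 2 * d₂ ^ 2))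
        * (d₁ ^ 6 - d₂ ^ 6 - 3 * d₁ ^ 4 * d₂ ^ 2 + 3 * d₁ ^ 2 * d₂ ^ 4)
        * G₁ * G₂ * G₃ * G₄ := by
  have h1 : d₁ ≠ 0 := fun h => hd (by simp [h])
  have h2 : d₂ ≠ 0 := fun h => hd (by simp [h])
  set A₃ : ℂ := -a₂ * (d₁ * d₂ - d₂ ^ 2 - d₁ * d₄) with hA₃
  set C₃ : ℂ := -Complex.I * A * (d₁ * d₂ + d₂ ^ 2 + d₁ * d₄) with hC₃
  set D₃ : ℂ := -(d₁ ^ 2 - d₂ ^ 2 - d₁ * d₄) with hD₃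
  set N : Matrix (Fin 4) (Fin 4) ℂ :=
    !![d₁ * d₂ * a₂ * G₁, d₁ * d₂ * a₂ * G₁, A₃ * G₁, A₃ * G₁;
       d₂ * d₂ * G₂, d₁ * d₂ * G₂, d₄ * d₂ * G₂, D₃ * G₂;
       d₁ * d₂ * (-Complex.I * A * G₃), d₁ * d₂ * (Complex.I * A * G₃), C₃ * G₃, -(C₃ * G₃);
       d₁ * d₂ * G₄, d₂ * d₂ * G₄, D₃ * G₄, d₄ * d₂ * G₄] with hN
  set v : Fin 4 → ℂ := ![(d₁ * d₂)⁻¹, d₂⁻¹, (d₁ * d₂)⁻¹, d₂⁻¹] with hv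
  have hMN : M = Matrix.of (fun i j => v i * N i j) := by
    subst hM ha₃ hc₃ hd₃
    ext i j
    fin_cases i <;> fin_cases j <;>
      simp only [hN, hv, Matrix.of_apply, Matrix.cons_val', Matrix.cons_val_zero,
        Matrix.cons_val_one, Matrix.head_cons, Matrix.cons_val_two, Matrix.cons_val_three,
        Matrix.vecHead, Matrix.vecTail, Matrix.empty_val', Matrix.cons_val_fin_one,
        Matrix.head_fin_const, Function.comp, Matrix.cons_val_succ, Fin.isValue,
          Fin.reduceFinMk, Matrix.cons_val] <;>
      field_simp <;> ring
  rw [hMN, Matrix.det_mul_column, my_det_fin_four]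
  simp only [hN, hv, Matrix.of_apply, Matrix.cons_val', Matrix.cons_val_zero,
    Matrix.cons_val_one, Matrix.head_cons, Matrix.cons_val_two, Matrix.cons_val_three,
    Matrix.vecHead, Matrix.vecTail, Matrix.empty_val', Matrix.cons_val_fin_one,
    Matrix.head_fin_const, Function.comp, Matrix.cons_val_succ, Fin.prod_univ_four,
    Fin.isValue, hA₃, hC₃, hD₃]
  field_simp
  ring
end

section
/- Let n ∈ ℕ, let γ_j, ζ_j ∈ ℂ be nonzero for j = 1,…,n, let β_j ∈ ℂ, and let g_j : ℂ → ℂ be twice differentiable. Set α_j = γ_j(γ_j + ζ_j)/ζ_j and λ_j = −γ_j(γ_j + ζ_j)²/ζ_j², and define ϑ : ℂ⁴ → ℂ (variables (x,r,t,z)) by ϑ = Σ_{j=1}^{n} g_j(α_j x + γ_j r + ζ_j t + λ_j z + β_j). Then ϑ satisfies the equal-symmetries system: ϑ_{rt} + ϑ_{rr} − ϑ_{xt} = 0, ϑ_{xx} + ϑ_{rz} = 0, and ϑ_{rx} + ϑ_{xt} + ϑ_{tz} = 0 at every point. -/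
lemma key_sum_affine {n : ℕ} (g : Fin n → ℂ → ℂ) (hg : ∀ j, Differentiable ℂ (g j))
    (c d : Fin n → ℂ) (s : ℂ) :
    deriv (fun s => ∑ j : Fin n, g j (c j * s + d j)) s
      = ∑ j : Fin n, c j * deriv (g j) (c j * s + d j) := by
  have H : HasDerivAt (fun s => ∑ j : Fin n, g j (c j * s + d j))
      (∑ j : Fin n, c j * deriv (g j) (c j * s + d j)) s := by
    apply HasDerivAt.fun_sum
    intro j _
    have h1 : HasDerivAt (fun s : ℂ => c j * s + d j) (c j) s := by
      simpa using ((hasDerivAt_id s).const_mul (c j)).add_const (d j)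
    have h2 := ((hg j) (c j * s + d j)).hasDerivAt
    simpa [mul_comm, Function.comp_def] using h2.comp s h1
  exact H.deriv

lemma key_sum_affine2 {n : ℕ} (G : Fin n → ℂ → ℂ) (hG : ∀ j, Differentiable ℂ (G j))
    (e c d : Fin n → ℂ) (s : ℂ) :
    deriv (fun s => ∑ j : Fin n, e j * G j (c j * s + d j)) s
      = ∑ j : Fin n, c j * (e j * deriv (G j) (c j * s + d j)) := by
  have := key_sum_affine (fun j => fun u => e j * G j u)
    (fun j => (hG j).const_mul (e j)) c d s
  rw [this]
  refine Finset.sum_congr rfl fun j _ => ?_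
  rw [deriv_const_mul _ ((hG j) _)]

/-- the functional-sum ansatz solves the equal-symmetries system
arising from the Legendre-transformed second heavenly equation. -/
theorem stmt10 (n : ℕ) (γ ζ : Fin n → ℂ)
    (hγ : ∀ j, γ j ≠ 0) (hζ : ∀ j, ζ j ≠ 0) (β : Fin n → ℂ)
    (g : Fin n → ℂ → ℂ) (hg : ∀ j, ContDiff ℂ 2 (g j))
    (α lam : Fin n → ℂ)
    (hα : ∀ j, α j = γ j * (γ j + ζ j) / ζ j)
    (hlam : ∀ j, lam j = -(γ j * (γ j + ζ j) ^ 2 / (ζ j) ^ 2))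
    (ϑ : ℂ → ℂ → ℂ → ℂ → ℂ)
    (hϑ : ϑ = fun x r t z =>
      ∑ j : Fin n, g j (α j * x + γ j * r + ζ j * t + lam j * z + β j)) :
    ∀ x r t z : ℂ,
      pd2 (pd3 ϑ) x r t z + pd2 (pd2 ϑ) x r t z - pd1 (pd3 ϑ) x r t z = 0
      ∧ pd1 (pd1 ϑ) x r t z + pd2 (pd4 ϑ) x r t z = 0
      ∧ pd2 (pd1 ϑ) x r t z + pd1 (pd3 ϑ) x r t z + pd3 (pd4 ϑ) x r t z = 0 := by
  have hgd : ∀ j, Differentiable ℂ (g j) := fun j => (hg j).differentiable (by norm_num)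
  have hgd1 : ∀ j, Differentiable ℂ (deriv (g j)) := by
    intro j
    have h2 : ContDiff ℂ ((1 : ℕ∞) + 1) (g j) := by
      have := hg j; norm_num at this ⊢; exact this
    exact (contDiff_succ_iff_deriv.mp h2).2.2.differentiable (by norm_num)
  -- first partials
  have hp1 : ∀ a b c d : ℂ, pd1 ϑ a b c d
      = ∑ j : Fin n, α j * deriv (g j) (α j * a + γ j * b + ζ j * c + lam j * d + β j) := by
    intro a b c d
    simp only [hϑ, pd1]
    rw [show (fun s => ∑ j : Fin n, g j (α j * s + γ j * b + ζ j * c + lam j * d + β j))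
        = fun s => ∑ j : Fin n, g j (α j * s + (γ j * b + ζ j * c + lam j * d + β j)) from
      funext fun s => Finset.sum_congr rfl fun j _ => congrArg (g j) (by ring)]
    rw [key_sum_affine g hgd α _ a]
    exact Finset.sum_congr rfl fun j _ => by
      rw [show α j * a + (γ j * b + ζ j * c + lam j * d + β j)
          = α j * a + γ j * b + ζ j * c + lam j * d + β j from by ring]
  have hp2 : ∀ a b c d : ℂ, pd2 ϑ a b c d
      = ∑ j : Fin n, γ j * deriv (g j) (α j * a + γ j * b + ζ j * c + lam j * d + β j) := by
    intro a b c d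
    simp only [hϑ, pd2]
    rw [show (fun s => ∑ j : Fin n, g j (α j * a + γ j * s + ζ j * c + lam j * d + β j))
        = fun s => ∑ j : Fin n, g j (γ j * s + (α j * a + ζ j * c + lam j * d + β j)) from
      funext fun s => Finset.sum_congr rfl fun j _ => congrArg (g j) (by ring)]
    rw [key_sum_affine g hgd γ _ b]
    exact Finset.sum_congr rfl fun j _ => by
      rw [show γ j * b + (α j * a + ζ j * c + lam j * d + β j)
          = α j * a + γ j * b + ζ j * c + lam j * d + β j from by ring]
  have hp3 : ∀ a b c d : ℂ, pd3 ϑ a b c d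
      = ∑ j : Fin n, ζ j * deriv (g j) (α j * a + γ j * b + ζ j * c + lam j * d + β j) := by
    intro a b c d
    simp only [hϑ, pd3]
    rw [show (fun s => ∑ j : Fin n, g j (α j * a + γ j * b + ζ j * s + lam j * d + β j))
        = fun s => ∑ j : Fin n, g j (ζ j * s + (α j * a + γ j * b + lam j * d + β j)) from
      funext fun s => Finset.sum_congr rfl fun j _ => congrArg (g j) (by ring)]
    rw [key_sum_affine g hgd ζ _ c]
    exact Finset.sum_congr rfl fun j _ => by
      rw [show ζ j * c + (α j * a + γ j * b + lam j * d + β j)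
          = α j * a + γ j * b + ζ j * c + lam j * d + β j from by ring]
  have hp4 : ∀ a b c d : ℂ, pd4 ϑ a b c d
      = ∑ j : Fin n, lam j * deriv (g j) (α j * a + γ j * b + ζ j * c + lam j * d + β j) := by
    intro a b c d
    simp only [hϑ, pd4]
    rw [show (fun s => ∑ j : Fin n, g j (α j * a + γ j * b + ζ j * c + lam j * s + β j))
        = fun s => ∑ j : Fin n, g j (lam j * s + (α j * a + γ j * b + ζ j * c + β j)) from
      funext fun s => Finset.sum_congr rfl fun j _ => congrArg (g j) (by ring)]
    rw [key_sum_affine g hgd lam _ d]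
    exact Finset.sum_congr rfl fun j _ => by
      rw [show lam j * d + (α j * a + γ j * b + ζ j * c + β j)
          = α j * a + γ j * b + ζ j * c + lam j * d + β j from by ring]
  intro x r t z
  set G2 : Fin n → ℂ → ℂ := fun j => deriv (deriv (g j)) with hG2
  have A : Fin n → ℂ := fun j => α j * x + γ j * r + ζ j * t + lam j * z + β j
  -- second partials
  have hp23 : pd2 (pd3 ϑ) x r t z
      = ∑ j : Fin n, γ j * (ζ j * G2 j (α j * x + γ j * r + ζ j * t + lam j * z + β j)) := by
    simp only [pd2]
    rw [show (fun s => pd3 ϑ x s t z)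
        = fun s => ∑ j : Fin n, ζ j * deriv (g j) (γ j * s + (α j * x + ζ j * t + lam j * z + β j)) from
      funext fun s => (hp3 x s t z).trans (Finset.sum_congr rfl fun j _ => by
        rw [show α j * x + γ j * s + ζ j * t + lam j * z + β j
            = γ j * s + (α j * x + ζ j * t + lam j * z + β j) from by ring])]
    rw [key_sum_affine2 (fun j => deriv (g j)) hgd1 ζ γ _ r]
    exact Finset.sum_congr rfl fun j _ => by
      rw [show γ j * r + (α j * x + ζ j * t + lam j * z + β j)
          = α j * x + γ j * r + ζ j * t + lam j * z + β j from by ring]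
  have hp22 : pd2 (pd2 ϑ) x r t z
      = ∑ j : Fin n, γ j * (γ j * G2 j (α j * x + γ j * r + ζ j * t + lam j * z + β j)) := by
    rw [show pd2 (pd2 ϑ) x r t z = deriv (fun s => pd2 ϑ x s t z) r from rfl]
    rw [show (fun s => pd2 ϑ x s t z)
        = fun s => ∑ j : Fin n, γ j * deriv (g j) (γ j * s + (α j * x + ζ j * t + lam j * z + β j)) from
      funext fun s => (hp2 x s t z).trans (Finset.sum_congr rfl fun j _ => by
        rw [show α j * x + γ j * s + ζ j * t + lam j * z + β j
            = γ j * s + (α j * x + ζ j * t + lam j * z + β j) from by ring])]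
    rw [key_sum_affine2 (fun j => deriv (g j)) hgd1 γ γ _ r]
    exact Finset.sum_congr rfl fun j _ => by
      rw [show γ j * r + (α j * x + ζ j * t + lam j * z + β j)
          = α j * x + γ j * r + ζ j * t + lam j * z + β j from by ring]
  have hp13 : pd1 (pd3 ϑ) x r t z
      = ∑ j : Fin n, α j * (ζ j * G2 j (α j * x + γ j * r + ζ j * t + lam j * z + β j)) := by
    simp only [pd1]
    rw [show (fun s => pd3 ϑ s r t z)
        = fun s => ∑ j : Fin n, ζ j * deriv (g j) (α j * s + (γ j * r + ζ j * t + lam j * z + β j)) from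
      funext fun s => (hp3 s r t z).trans (Finset.sum_congr rfl fun j _ => by
        rw [show α j * s + γ j * r + ζ j * t + lam j * z + β j
            = α j * s + (γ j * r + ζ j * t + lam j * z + β j) from by ring])]
    rw [key_sum_affine2 (fun j => deriv (g j)) hgd1 ζ α _ x]
    exact Finset.sum_congr rfl fun j _ => by
      rw [show α j * x + (γ j * r + ζ j * t + lam j * z + β j)
          = α j * x + γ j * r + ζ j * t + lam j * z + β j from by ring]
  have hp11 : pd1 (pd1 ϑ) x r t z
      = ∑ j : Fin n, α j * (α j * G2 j (α j * x + γ j * r + ζ j * t + lam j * z + β j)) := by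
    rw [show pd1 (pd1 ϑ) x r t z = deriv (fun s => pd1 ϑ s r t z) x from rfl]
    rw [show (fun s => pd1 ϑ s r t z)
        = fun s => ∑ j : Fin n, α j * deriv (g j) (α j * s + (γ j * r + ζ j * t + lam j * z + β j)) from
      funext fun s => (hp1 s r t z).trans (Finset.sum_congr rfl fun j _ => by
        rw [show α j * s + γ j * r + ζ j * t + lam j * z + β j
            = α j * s + (γ j * r + ζ j * t + lam j * z + β j) from by ring])]
    rw [key_sum_affine2 (fun j => deriv (g j)) hgd1 α α _ x]
    exact Finset.sum_congr rfl fun j _ => by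
      rw [show α j * x + (γ j * r + ζ j * t + lam j * z + β j)
          = α j * x + γ j * r + ζ j * t + lam j * z + β j from by ring]
  have hp24 : pd2 (pd4 ϑ) x r t z
      = ∑ j : Fin n, γ j * (lam j * G2 j (α j * x + γ j * r + ζ j * t + lam j * z + β j)) := by
    simp only [pd2]
    rw [show (fun s => pd4 ϑ x s t z)
        = fun s => ∑ j : Fin n, lam j * deriv (g j) (γ j * s + (α j * x + ζ j * t + lam j * z + β j)) from
      funext fun s => (hp4 x s t z).trans (Finset.sum_congr rfl fun j _ => by
        rw [show α j * x + γ j * s + ζ j * t + lam j * z + β j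
            = γ j * s + (α j * x + ζ j * t + lam j * z + β j) from by ring])]
    rw [key_sum_affine2 (fun j => deriv (g j)) hgd1 lam γ _ r]
    exact Finset.sum_congr rfl fun j _ => by
      rw [show γ j * r + (α j * x + ζ j * t + lam j * z + β j)
          = α j * x + γ j * r + ζ j * t + lam j * z + β j from by ring]
  have hp21 : pd2 (pd1 ϑ) x r t z
      = ∑ j : Fin n, γ j * (α j * G2 j (α j * x + γ j * r + ζ j * t + lam j * z + β j)) := by
    simp only [pd2]
    rw [show (fun s => pd1 ϑ x s t z)
        = fun s => ∑ j : Fin n, α j * deriv (g j) (γ j * s + (α j * x + ζ j * t + lam j * z + β j)) from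
      funext fun s => (hp1 x s t z).trans (Finset.sum_congr rfl fun j _ => by
        rw [show α j * x + γ j * s + ζ j * t + lam j * z + β j
            = γ j * s + (α j * x + ζ j * t + lam j * z + β j) from by ring])]
    rw [key_sum_affine2 (fun j => deriv (g j)) hgd1 α γ _ r]
    exact Finset.sum_congr rfl fun j _ => by
      rw [show γ j * r + (α j * x + ζ j * t + lam j * z + β j)
          = α j * x + γ j * r + ζ j * t + lam j * z + β j from by ring]
  have hp34 : pd3 (pd4 ϑ) x r t z
      = ∑ j : Fin n, ζ j * (lam j * G2 j (α j * x + γ j * r + ζ j * t + lam j * z + β j)) := by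
    simp only [pd3]
    rw [show (fun s => pd4 ϑ x r s z)
        = fun s => ∑ j : Fin n, lam j * deriv (g j) (ζ j * s + (α j * x + γ j * r + lam j * z + β j)) from
      funext fun s => (hp4 x r s z).trans (Finset.sum_congr rfl fun j _ => by
        rw [show α j * x + γ j * r + ζ j * s + lam j * z + β j
            = ζ j * s + (α j * x + γ j * r + lam j * z + β j) from by ring])]
    rw [key_sum_affine2 (fun j => deriv (g j)) hgd1 lam ζ _ t]
    exact Finset.sum_congr rfl fun j _ => by
      rw [show ζ j * t + (α j * x + γ j * r + lam j * z + β j)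
          = α j * x + γ j * r + ζ j * t + lam j * z + β j from by ring]
  refine ⟨?_, ?_, ?_⟩
  · rw [hp23, hp22, hp13, ← Finset.sum_add_distrib, ← Finset.sum_sub_distrib]
    apply Finset.sum_eq_zero
    intro j _
    generalize G2 j (α j * x + γ j * r + ζ j * t + lam j * z + β j) = X
    rw [hα j]
    field_simp [hζ j]
    ring
  · rw [hp11, hp24, ← Finset.sum_add_distrib]
    apply Finset.sum_eq_zero
    intro j _
    generalize G2 j (α j * x + γ j * r + ζ j * t + lam j * z + β j) = X
    rw [hα j, hlam j]
    field_simp [hζ j]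
    ring
  · rw [hp21, hp13, hp34, ← Finset.sum_add_distrib, ← Finset.sum_add_distrib]
    apply Finset.sum_eq_zero
    intro j _
    generalize G2 j (α j * x + γ j * r + ζ j * t + lam j * z + β j) = X
    rw [hα j, hlam j]
    field_simp [hζ j]
    ring
end

section
/- Let n ∈ ℕ, let γ_j, ζ_j ∈ ℂ be nonzero for j = 1,…,n, let β_j ∈ ℂ, and let g_j : ℂ → ℂ be twice differentiable. Set α_j = γ_j²/ζ_j and λ_j = −γ_j³/ζ_j², and define ϑ : ℂ⁴ → ℂ (variables (x,r,t,z)) by ϑ = Σ_{j=1}^{n} g_j(α_j x + γ_j r + ζ_j t + λ_j z + β_j). Then ϑ satisfies the higher-symmetry system: ϑ_{rr} − ϑ_{xt} = 0, ϑ_{rx} + ϑ_{tz} = 0, and ϑ_{xx} + ϑ_{rz} = 0 at every point (subclass II). -/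
private lemma key {n : ℕ} (G : Fin n → ℂ → ℂ) (hG : ∀ j, Differentiable ℂ (G j))
    (e c d : Fin n → ℂ) (s : ℂ) :
    deriv (fun y => ∑ j : Fin n, e j * G j (c j * y + d j)) s
      = ∑ j : Fin n, e j * c j * deriv (G j) (c j * s + d j) := by
  have H : HasDerivAt (fun y => ∑ j : Fin n, e j * G j (c j * y + d j))
      (∑ j : Fin n, e j * c j * deriv (G j) (c j * s + d j)) s := by
    apply HasDerivAt.fun_sum
    intro j _
    have h1 : HasDerivAt (fun y : ℂ => c j * y + d j) (c j) s := by
      simpa using ((hasDerivAt_id s).const_mul (c j)).add_const (d j)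
    have h2 := ((hG j (c j * s + d j)).hasDerivAt).comp s h1
    have h3 := h2.const_mul (e j)
    convert h3 using 1
    · rfl
    · rfl
    · ring
  exact H.deriv

private lemma key0 {n : ℕ} (G : Fin n → ℂ → ℂ) (hG : ∀ j, Differentiable ℂ (G j))
    (c d : Fin n → ℂ) (s : ℂ) :
    deriv (fun y => ∑ j : Fin n, G j (c j * y + d j)) s
      = ∑ j : Fin n, c j * deriv (G j) (c j * s + d j) := by
  have h := key G hG (fun _ => (1 : ℂ)) c d s
  simpa using h

/-- the functional-sum ansatz (subclass II) solves the
higher-symmetry system arising from the Legendre-transformed second heavenly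
equation. -/
theorem stmt12 (n : ℕ) (γ ζ : Fin n → ℂ)
    (hγ : ∀ j, γ j ≠ 0) (hζ : ∀ j, ζ j ≠ 0) (β : Fin n → ℂ)
    (g : Fin n → ℂ → ℂ) (hg : ∀ j, ContDiff ℂ 2 (g j))
    (α lam : Fin n → ℂ)
    (hα : ∀ j, α j = (γ j) ^ 2 / ζ j)
    (hlam : ∀ j, lam j = -((γ j) ^ 3 / (ζ j) ^ 2))
    (ϑ : ℂ → ℂ → ℂ → ℂ → ℂ)
    (hϑ : ϑ = fun x r t z =>
      ∑ j : Fin n, g j (α j * x + γ j * r + ζ j * t + lam j * z + β j)) :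
    ∀ x r t z : ℂ,
      pd2 (pd2 ϑ) x r t z - pd1 (pd3 ϑ) x r t z = 0
      ∧ pd2 (pd1 ϑ) x r t z + pd3 (pd4 ϑ) x r t z = 0
      ∧ pd1 (pd1 ϑ) x r t z + pd2 (pd4 ϑ) x r t z = 0 := by
  -- differentiability facts
  have hgd : ∀ j, Differentiable ℂ (g j) := fun j => (hg j).differentiable two_ne_zero
  have hg1 : ∀ j, Differentiable ℂ (deriv (g j)) := by
    intro j
    have h2 := hg j
    rw [(by norm_num : (2 : WithTop ℕ∞) = 1 + 1)] at h2
    have := (contDiff_succ_iff_deriv.mp h2).2.2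
    exact this.differentiable one_ne_zero
  set G1 : Fin n → ℂ → ℂ := fun j => deriv (g j) with hG1
  set G2 : Fin n → ℂ → ℂ := fun j => deriv (G1 j) with hG2
  -- first partials
  have hp1 : ∀ a b c d : ℂ, pd1 ϑ a b c d
      = ∑ j : Fin n, α j * G1 j (α j * a + (γ j * b + ζ j * c + lam j * d + β j)) := by
    intro a b c d
    rw [pd1, hϑ]
    have : (fun s => ∑ j : Fin n, g j (α j * s + γ j * b + ζ j * c + lam j * d + β j))
        = fun s => ∑ j : Fin n, g j (α j * s + (γ j * b + ζ j * c + lam j * d + β j)) := by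
      funext s
      exact Finset.sum_congr rfl fun j _ => by rw [show α j * s + γ j * b + ζ j * c + lam j * d + β j
        = α j * s + (γ j * b + ζ j * c + lam j * d + β j) from by ring]
    rw [this]
    exact key0 g hgd α (fun j => γ j * b + ζ j * c + lam j * d + β j) a
  have hp2 : ∀ a b c d : ℂ, pd2 ϑ a b c d
      = ∑ j : Fin n, γ j * G1 j (γ j * b + (α j * a + ζ j * c + lam j * d + β j)) := by
    intro a b c d
    rw [pd2, hϑ]
    have : (fun s => ∑ j : Fin n, g j (α j * a + γ j * s + ζ j * c + lam j * d + β j))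
        = fun s => ∑ j : Fin n, g j (γ j * s + (α j * a + ζ j * c + lam j * d + β j)) := by
      funext s
      exact Finset.sum_congr rfl fun j _ => by rw [show α j * a + γ j * s + ζ j * c + lam j * d + β j
        = γ j * s + (α j * a + ζ j * c + lam j * d + β j) from by ring]
    rw [this]
    exact key0 g hgd γ (fun j => α j * a + ζ j * c + lam j * d + β j) b
  have hp3 : ∀ a b c d : ℂ, pd3 ϑ a b c d
      = ∑ j : Fin n, ζ j * G1 j (ζ j * c + (α j * a + γ j * b + lam j * d + β j)) := by
    intro a b c d
    rw [pd3, hϑ]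
    have : (fun s => ∑ j : Fin n, g j (α j * a + γ j * b + ζ j * s + lam j * d + β j))
        = fun s => ∑ j : Fin n, g j (ζ j * s + (α j * a + γ j * b + lam j * d + β j)) := by
      funext s
      exact Finset.sum_congr rfl fun j _ => by rw [show α j * a + γ j * b + ζ j * s + lam j * d + β j
        = ζ j * s + (α j * a + γ j * b + lam j * d + β j) from by ring]
    rw [this]
    exact key0 g hgd ζ (fun j => α j * a + γ j * b + lam j * d + β j) c
  have hp4 : ∀ a b c d : ℂ, pd4 ϑ a b c d
      = ∑ j : Fin n, lam j * G1 j (lam j * d + (α j * a + γ j * b + ζ j * c + β j)) := by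
    intro a b c d
    rw [pd4, hϑ]
    have : (fun s => ∑ j : Fin n, g j (α j * a + γ j * b + ζ j * c + lam j * s + β j))
        = fun s => ∑ j : Fin n, g j (lam j * s + (α j * a + γ j * b + ζ j * c + β j)) := by
      funext s
      exact Finset.sum_congr rfl fun j _ => by rw [show α j * a + γ j * b + ζ j * c + lam j * s + β j
        = lam j * s + (α j * a + γ j * b + ζ j * c + β j) from by ring]
    rw [this]
    exact key0 g hgd lam (fun j => α j * a + γ j * b + ζ j * c + β j) d
  intro x r t z
  -- the common argument
  set A : Fin n → ℂ := fun j => α j * x + γ j * r + ζ j * t + lam j * z + β j with hA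
  -- six second partials
  have h22 : pd2 (pd2 ϑ) x r t z = ∑ j : Fin n, γ j * γ j * G2 j (A j) := by
    rw [pd2]
    have : (fun s => pd2 ϑ x s t z)
        = fun s => ∑ j : Fin n, γ j * G1 j (γ j * s + (α j * x + ζ j * t + lam j * z + β j)) := by
      funext s; exact hp2 x s t z
    rw [this, key G1 hg1 γ γ (fun j => α j * x + ζ j * t + lam j * z + β j) r]
    exact Finset.sum_congr rfl fun j _ => by rw [show γ j * r + (α j * x + ζ j * t + lam j * z + β j) = A j from by rw [hA]; ring]
  have h13 : pd1 (pd3 ϑ) x r t z = ∑ j : Fin n, ζ j * α j * G2 j (A j) := by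
    rw [pd1]
    have : (fun s => pd3 ϑ s r t z)
        = fun s => ∑ j : Fin n, ζ j * G1 j (α j * s + (ζ j * t + γ j * r + lam j * z + β j)) := by
      funext s
      rw [hp3]
      exact Finset.sum_congr rfl fun j _ => by rw [show ζ j * t + (α j * s + γ j * r + lam j * z + β j) = α j * s + (ζ j * t + γ j * r + lam j * z + β j) from by ring]
    rw [this, key G1 hg1 ζ α (fun j => ζ j * t + γ j * r + lam j * z + β j) x]
    exact Finset.sum_congr rfl fun j _ => by rw [show α j * x + (ζ j * t + γ j * r + lam j * z + β j) = A j from by rw [hA]; ring]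
  have h21 : pd2 (pd1 ϑ) x r t z = ∑ j : Fin n, α j * γ j * G2 j (A j) := by
    rw [pd2]
    have : (fun s => pd1 ϑ x s t z)
        = fun s => ∑ j : Fin n, α j * G1 j (γ j * s + (α j * x + ζ j * t + lam j * z + β j)) := by
      funext s
      rw [hp1]
      exact Finset.sum_congr rfl fun j _ => by rw [show α j * x + (γ j * s + ζ j * t + lam j * z + β j) = γ j * s + (α j * x + ζ j * t + lam j * z + β j) from by ring]
    rw [this, key G1 hg1 α γ (fun j => α j * x + ζ j * t + lam j * z + β j) r]
    exact Finset.sum_congr rfl fun j _ => by rw [show γ j * r + (α j * x + ζ j * t + lam j * z + β j) = A j from by rw [hA]; ring]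
  have h34 : pd3 (pd4 ϑ) x r t z = ∑ j : Fin n, lam j * ζ j * G2 j (A j) := by
    rw [pd3]
    have : (fun s => pd4 ϑ x r s z)
        = fun s => ∑ j : Fin n, lam j * G1 j (ζ j * s + (lam j * z + α j * x + γ j * r + β j)) := by
      funext s
      rw [hp4]
      exact Finset.sum_congr rfl fun j _ => by rw [show lam j * z + (α j * x + γ j * r + ζ j * s + β j) = ζ j * s + (lam j * z + α j * x + γ j * r + β j) from by ring]
    rw [this, key G1 hg1 lam ζ (fun j => lam j * z + α j * x + γ j * r + β j) t]
    exact Finset.sum_congr rfl fun j _ => by rw [show ζ j * t + (lam j * z + α j * x + γ j * r + β j) = A j from by rw [hA]; ring]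
  have h11 : pd1 (pd1 ϑ) x r t z = ∑ j : Fin n, α j * α j * G2 j (A j) := by
    rw [pd1]
    have : (fun s => pd1 ϑ s r t z)
        = fun s => ∑ j : Fin n, α j * G1 j (α j * s + (γ j * r + ζ j * t + lam j * z + β j)) := by
      funext s; exact hp1 s r t z
    rw [this, key G1 hg1 α α (fun j => γ j * r + ζ j * t + lam j * z + β j) x]
    exact Finset.sum_congr rfl fun j _ => by rw [show α j * x + (γ j * r + ζ j * t + lam j * z + β j) = A j from by rw [hA]; ring]
  have h24 : pd2 (pd4 ϑ) x r t z = ∑ j : Fin n, lam j * γ j * G2 j (A j) := by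
    rw [pd2]
    have : (fun s => pd4 ϑ x s t z)
        = fun s => ∑ j : Fin n, lam j * G1 j (γ j * s + (lam j * z + α j * x + ζ j * t + β j)) := by
      funext s
      rw [hp4]
      exact Finset.sum_congr rfl fun j _ => by rw [show lam j * z + (α j * x + γ j * s + ζ j * t + β j) = γ j * s + (lam j * z + α j * x + ζ j * t + β j) from by ring]
    rw [this, key G1 hg1 lam γ (fun j => lam j * z + α j * x + ζ j * t + β j) r]
    exact Finset.sum_congr rfl fun j _ => by rw [show γ j * r + (lam j * z + α j * x + ζ j * t + β j) = A j from by rw [hA]; ring]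
  refine ⟨?_, ?_, ?_⟩
  · rw [h22, h13, ← Finset.sum_sub_distrib]
    apply Finset.sum_eq_zero
    intro j _
    have hc : γ j * γ j - ζ j * α j = 0 := by
      rw [hα]; field_simp [hζ j]; ring
    have : γ j * γ j * G2 j (A j) - ζ j * α j * G2 j (A j)
        = (γ j * γ j - ζ j * α j) * G2 j (A j) := by ring
    rw [this, hc, zero_mul]
  · rw [h21, h34, ← Finset.sum_add_distrib]
    apply Finset.sum_eq_zero
    intro j _
    have hc : α j * γ j + lam j * ζ j = 0 := by
      rw [hα, hlam]; field_simp [hζ j]; ring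
    have : α j * γ j * G2 j (A j) + lam j * ζ j * G2 j (A j)
        = (α j * γ j + lam j * ζ j) * G2 j (A j) := by ring
    rw [this, hc, zero_mul]
  · rw [h11, h24, ← Finset.sum_add_distrib]
    apply Finset.sum_eq_zero
    intro j _
    have hc : α j * α j + lam j * γ j = 0 := by
      rw [hα, hlam]; field_simp [hζ j]; ring
    have : α j * α j * G2 j (A j) + lam j * γ j * G2 j (A j)
        = (α j * α j + lam j * γ j) * G2 j (A j) := by ring
    rw [this, hc, zero_mul]
end
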